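/- arXiv:1810.09887 — 3 statements merged into one kernel-verified Lean document; each statement's English description precedes it below -/
import Mathlib

section
/- Define S_i(N) to be the number of Dyck paths from (0,0) to (N,N) for which column N-i lies weakly right of the next-to-last northeast corner and strictly left of the last northeast corner. Then S_i(N) = i·T_i(N) + S_{i-1}(N-1) for i ≥ 2, with S_1(N) = C_{N-1}. -/
def IsPrefixDyck (w : List Bool) : Prop :=
  ∀ t : ℕ, (w.take t).count false ≤ (w.take t).count true

/-- `w` is (the step word of) a Dyck path of size `N`. -/
def IsDyck (N : ℕ) (w : List Bool) : Prop :=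
  w.length = 2 * N ∧ w.count false = N ∧ IsPrefixDyck w

/-- The set of columns of northeast corners of `w` (the column is the number of
east steps up to and including the east step of the corner). -/
def cornerCols (w : List Bool) : Set ℕ :=
  {c | ∃ t : ℕ, w[t]? = some true ∧ w[t + 1]? = some false ∧
    c = (w.take (t + 2)).count false}

/-- Column `m` lies weakly right of the next-to-last northeast corner and strictly
left of the last northeast corner: there is a corner in a column `> m` and every
other corner is in a column `≤ m`. -/
def WinCol (m : ℕ) (w : List Bool) : Prop :=
  ∃ c ∈ cornerCols w, m < c ∧ ∀ c' ∈ cornerCols w, c' ≠ c → c' ≤ m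

/-- The number of partial Dyck paths from `(0,0)` to `(a,b)`. -/
noncomputable def partialDyckCount (a b : ℕ) : ℕ :=
  Nat.card {w : List Bool // w.length = a + b ∧ w.count false = a ∧ IsPrefixDyck w}

/-- `T_i(N)`: the number of partial Dyck paths from `(0,0)` to `(N-1-i, N-1)`. -/
noncomputable def T (i N : ℕ) : ℕ := partialDyckCount (N - 1 - i) (N - 1)

/-- `S_i(N)`: the number of Dyck paths of size `N` for which column `N-i` lies
weakly right of the next-to-last northeast corner and strictly left of the last. -/
noncomputable def S (i N : ℕ) : ℕ :=
  Nat.card {w : List Bool // IsDyck N w ∧ WinCol (N - i) w}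

namespace SRecAux
open List

lemma count_fa (l : List Bool) : l.count false + l.count true = l.length := by
  induction l with
  | nil => simp
  | cons a l ih => cases a <;> simp [List.count_cons] <;> omega

lemma pd_of_prefix {x w : List Bool} (h : x <+: w) (hw : IsPrefixDyck w) : IsPrefixDyck x := by
  obtain ⟨y, rfl⟩ := h
  intro t
  rcases le_or_gt t x.length with ht | ht
  · have he : (x ++ y).take t = x.take t := by
      rw [take_append, Nat.sub_eq_zero_of_le ht, take_zero, append_nil]
    have h1 := hw t
    rwa [he] at h1
  · have h1 := hw x.length
    rw [take_left' rfl] at h1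
    rw [take_of_length_le (le_of_lt ht)]
    exact h1

lemma pd_count_le {x : List Bool} (hx : IsPrefixDyck x) : x.count false ≤ x.count true := by
  have := hx x.length
  rwa [take_length] at this

lemma pd_append_false {x : List Bool} (hx : IsPrefixDyck x) (r : ℕ)
    (h : x.count false + r ≤ x.count true) : IsPrefixDyck (x ++ replicate r false) := by
  intro t
  rcases le_or_gt t x.length with ht | ht
  · have he : (x ++ replicate r false).take t = x.take t := by
      rw [take_append, Nat.sub_eq_zero_of_le ht, take_zero, append_nil]
    rw [he]; exact hx t
  · rw [take_append, take_of_length_le (le_of_lt ht), take_replicate]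
    simp only [count_append, count_replicate]
    norm_num
    have : min (t - x.length) r ≤ r := min_le_right _ _
    omega

lemma pd_append_true {x : List Bool} (hx : IsPrefixDyck x) (g : ℕ) :
    IsPrefixDyck (x ++ replicate g true) := by
  intro t
  rcases le_or_gt t x.length with ht | ht
  · have he : (x ++ replicate g true).take t = x.take t := by
      rw [take_append, Nat.sub_eq_zero_of_le ht, take_zero, append_nil]
    rw [he]; exact hx t
  · rw [take_append, take_of_length_le (le_of_lt ht), take_replicate]
    simp only [count_append, count_replicate]
    norm_num
    have := pd_count_le hx
    omega

lemma ends_false {N : ℕ} {w : List Bool} (hw : IsDyck N w) (hN : 1 ≤ N) :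
    w.getLast? = some false := by
  obtain ⟨hl, hc, hp⟩ := hw
  have hne : w ≠ [] := by
    intro h; rw [h] at hl; simp at hl; omega
  have hdec := (dropLast_append_getLast hne).symm
  have hq : w.getLast? = some (w.getLast hne) := getLast?_eq_getLast hne
  rcases Bool.dichotomy (w.getLast hne) with h | h
  · rw [hq, h]
  · exfalso
    have hcnt : count false w = count false w.dropLast + count false [w.getLast hne] := by
      conv_lhs => rw [hdec]
      rw [count_append]
    have hlen : w.dropLast.length = 2 * N - 1 := by
      rw [length_dropLast, hl]
    have hfa := count_fa w.dropLast
    have h1 := hp (w.length - 1)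
    rw [← dropLast_eq_take] at h1
    rw [h] at hcnt
    simp at hcnt
    omega


lemma no_descent (l : List Bool)
    (h : ∀ s : ℕ, ¬(l[s]? = some true ∧ l[s + 1]? = some false)) :
    l = replicate (l.count false) false ++ replicate (l.count true) true := by
  induction l with
  | nil => simp
  | cons a l ih =>
    have h' : ∀ s : ℕ, ¬(l[s]? = some true ∧ l[s + 1]? = some false) := by
      intro s hs
      refine h (s + 1) ⟨?_, ?_⟩ <;> simp [hs.1, hs.2]
    have hl := ih h'
    cases a with
    | false =>
      have h1 : (false :: l).count false = l.count false + 1 := by simp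
      have h2 : (false :: l).count true = l.count true := by simp
      rw [h1, h2, replicate_succ, cons_append]
      rw [← hl]
    | true =>
      have hp : l.count false = 0 := by
        by_contra hp
        have h0 : l[0]? = some false := by
          rw [hl]
          rw [getElem?_append_left (by rw [length_replicate]; omega)]
          rw [getElem?_replicate, if_pos (by omega)]
        exact h 0 ⟨by simp, by simpa using h0⟩
      have h1 : (true :: l).count false = 0 := by simp [hp]
      have h2 : (true :: l).count true = l.count true + 1 := by simp
      rw [h1, h2, replicate_zero, nil_append, replicate_succ]
      rw [hp, replicate_zero, nil_append] at hl
      rw [← hl]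

lemma exists_descent (l : List Bool) (hmem : true ∈ l) (hlast : l.getLast? = some false) :
    ∃ s : ℕ, l[s]? = some true ∧ l[s + 1]? = some false := by
  induction l with
  | nil => simp at hmem
  | cons a l ih =>
    match l, hlast with
    | [], hlast =>
      simp at hmem hlast
      rw [hmem] at hlast
      exact absurd hlast (by simp)
    | b :: l', hlast =>
      have hlast' : (b :: l').getLast? = some false := by
        rwa [getLast?_cons_cons] at hlast
      by_cases hm : true ∈ b :: l'
      · obtain ⟨s, h1, h2⟩ := ih hm hlast'
        exact ⟨s + 1, by simpa using h1, by simpa using h2⟩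
      · have ha : a = true := by
          rcases mem_cons.mp hmem with h | h
          · exact h.symm
          · exact absurd h hm
        have hb : b = false := by
          cases b
          · rfl
          · exact absurd (mem_cons_self) hm
        exact ⟨0, by simp [ha], by simp [hb]⟩

lemma exists_split (w : List Bool) (m : ℕ) (hm : m ≤ w.count false) :
    ∃ A B, w = A ++ B ∧ A.count false = m ∧ (m = 0 → A = []) ∧
      (∀ h : A ≠ [], A.getLast h = false) := by
  induction w generalizing m with
  | nil =>
    have : m = 0 := by simpa using hm
    exact ⟨[], [], by simp, by simp [this], fun _ => rfl, by simp⟩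
  | cons a w ih =>
    rcases Nat.eq_zero_or_pos m with rfl | hm0
    · exact ⟨[], a :: w, rfl, rfl, fun _ => rfl, by simp⟩
    cases a with
    | true =>
      have hm' : m ≤ w.count false := by
        have : (true :: w).count false = w.count false := by simp
        omega
      obtain ⟨A, B, h1, h2, h3, h4⟩ := ih m hm'
      have hAne : A ≠ [] := by
        intro h; rw [h] at h2; simp at h2; omega
      refine ⟨true :: A, B, by rw [cons_append, h1], by simp [h2], fun h => absurd h (by omega),
        fun h => ?_⟩
      rw [getLast_cons hAne]
      exact h4 hAne
    | false =>
      have hm' : m - 1 ≤ w.count false := by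
        have : (false :: w).count false = w.count false + 1 := by simp
        omega
      obtain ⟨A, B, h1, h2, h3, h4⟩ := ih (m-1) hm'
      refine ⟨false :: A, B, by rw [cons_append, h1], by simp [h2]; omega,
        fun h => absurd h (by omega), fun h => ?_⟩
      rcases eq_or_ne A [] with rfl | hAne
      · simp
      · rw [getLast_cons hAne]
        exact h4 hAne


lemma corner_lt {w : List Bool} {t t' : ℕ}
    (h1 : w[t]? = some true) (h2 : w[t + 1]? = some false)
    (h1' : w[t']? = some true) (h2' : w[t' + 1]? = some false) (hlt : t < t') :
    (w.take (t + 2)).count false < (w.take (t' + 2)).count false := by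
  have ht2 : t + 2 ≤ t' + 1 := by
    rcases Nat.lt_or_ge t' (t + 2) with h | h
    · have he : t' = t + 1 := by omega
      rw [he] at h1'
      rw [h1'] at h2
      simp at h2
    · omega
  have he : t' + 2 = (t + 2) + (t' - t) := by omega
  have hsplit : (w.take (t' + 2)).count false =
      (w.take (t + 2)).count false + ((w.drop (t + 2)).take (t' - t)).count false := by
    conv_lhs => rw [he, take_add]
    rw [count_append]
  rw [hsplit]
  have hg : ((w.drop (t + 2)).take (t' - t))[t' - t - 1]? = some false := by
    rw [getElem?_take, if_pos (by omega), getElem?_drop]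
    have : t + 2 + (t' - t - 1) = t' + 1 := by omega
    rw [this]
    exact h2'
  have hmem : false ∈ (w.drop (t + 2)).take (t' - t) := mem_iff_getElem?.mpr ⟨_, hg⟩
  have := count_pos_iff.mpr hmem
  omega

lemma getElem_regions (A : List Bool) (p g r : ℕ) (t : ℕ) :
    (A ++ replicate p false ++ replicate g true ++ replicate r false)[t]? =
      if t < A.length then A[t]?
      else if t < A.length + p then some false
      else if t < A.length + p + g then some true
      else if t < A.length + p + g + r then some false
      else none := by
  rw [append_assoc, append_assoc]
  split_ifs with h1 h2 h3 h4
  · rw [getElem?_append_left h1]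
  · rw [getElem?_append_right (by omega), getElem?_append_left (by rw [length_replicate]; omega),
      getElem?_replicate, if_pos (by omega)]
  · rw [getElem?_append_right (by omega), getElem?_append_right (by rw [length_replicate]; omega),
      length_replicate, getElem?_append_left (by rw [length_replicate]; omega),
      getElem?_replicate, if_pos (by omega)]
  · rw [getElem?_append_right (by omega), getElem?_append_right (by rw [length_replicate]; omega),
      length_replicate, getElem?_append_right (by rw [length_replicate]; omega),
      length_replicate, getElem?_replicate, if_pos (by omega)]
  · rw [getElem?_append_right (by omega), getElem?_append_right (by rw [length_replicate]; omega),
      length_replicate, getElem?_append_right (by rw [length_replicate]; omega),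
      length_replicate, getElem?_replicate, if_neg (by omega)]

lemma take_regions (A : List Bool) (p g r : ℕ) (hr : 1 ≤ r) :
    (A ++ replicate p false ++ replicate g true ++ replicate r false).take
      (A.length + p + g + 1) =
      A ++ replicate p false ++ replicate g true ++ [false] := by
  have h1 : A ++ replicate p false ++ replicate g true ++ replicate r false =
      (A ++ replicate p false ++ replicate g true) ++ replicate r false := by
    simp [append_assoc]
  have h2 : (A ++ replicate p false ++ replicate g true).length = A.length + p + g := by
    simp
    omega
  rw [h1, take_append, h2, take_of_length_le (by omega), take_replicate]
  have h3 : min (A.length + p + g + 1 - (A.length + p + g)) r = 1 := by omega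
  rw [h3]
  simp [append_assoc]

lemma count_false_take_regions (A : List Bool) (p g r : ℕ) (hr : 1 ≤ r) :
    ((A ++ replicate p false ++ replicate g true ++ replicate r false).take
      (A.length + p + g + 1)).count false = A.count false + p + 1 := by
  rw [take_regions A p g r hr]
  simp [count_append, count_replicate]
  omega

theorem winCol_iff {N i : ℕ} {w : List Bool} (hw : IsDyck N w) (hi1 : 1 ≤ i) (hiN : i ≤ N) :
    WinCol (N - i) w ↔
      ∃ A p g r, w = A ++ replicate p false ++ replicate g true ++ replicate r false ∧
        A.count false = N - i ∧ (∀ h : A ≠ [], A.getLast h = false) ∧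
        p + r = i ∧ 1 ≤ g ∧ 1 ≤ r := by
  obtain ⟨hlen, hcnt, hpd⟩ := hw
  constructor
  · rintro ⟨c, ⟨t₀, hw1, hw2, hc⟩, hmc, hall⟩
    obtain ⟨A, B, hsplit, hAc, hA0, hAl⟩ := exists_split w (N - i) (by omega)
    set L := A.length with hL
    have hcB : B.count false = i := by
      have : w.count false = A.count false + B.count false := by rw [hsplit, count_append]
      omega
    have hBne : B ≠ [] := by
      intro h; rw [h] at hcB; simp at hcB; omega
    have hwlast : w.getLast? = some false := ends_false ⟨hlen, hcnt, hpd⟩ (by omega)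
    have hBlast : B.getLast? = some false := by
      rw [hsplit, getLast?_append, getLast?_eq_getLast hBne] at hwlast
      rw [getLast?_eq_getLast hBne]
      simpa using hwlast
    -- getElem transfer
    have hgetB : ∀ s : ℕ, w[L + s]? = B[s]? := by
      intro s
      rw [hsplit, getElem?_append_right (by omega)]
      congr 1
      omega
    have hcountB : ∀ u : ℕ, (w.take (L + u)).count false = (N - i) + (B.take u).count false := by
      intro u
      have he : L + u - A.length = u := by omega
      rw [hsplit, take_append, take_of_length_le (by omega), count_append, hAc, he]
    -- t₀ ≥ L
    have ht₀L : L ≤ t₀ := by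
      by_contra hlt
      push_neg at hlt
      rcases Nat.lt_or_ge (t₀ + 2) (L + 1) with h | h
      · -- t₀ + 2 ≤ L : column ≤ N - i
        have hsub : w.take (t₀ + 2) <+ A := by
          rw [hsplit, take_append, Nat.sub_eq_zero_of_le (by omega), take_zero,
            append_nil]
          exact take_sublist _ _
        have hle := hsub.count_le false
        omega
      · -- t₀ = L - 1
        have he : t₀ = L - 1 := by omega
        have hAne : A ≠ [] := by
          intro hA
          rw [hA] at hL
          simp [hL] at hlt
        have : w[t₀]? = some false := by
          rw [hsplit, getElem?_append_left (by omega), he, ← getLast?_eq_getElem?,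
            getLast?_eq_getLast hAne, hAl hAne]
        rw [this] at hw1
        simp at hw1
    set s₀ := t₀ - L with hs₀
    have ht₀ : t₀ = L + s₀ := by omega
    have hB1 : B[s₀]? = some true := by rw [← hgetB, ← ht₀]; exact hw1
    have hB2 : B[s₀ + 1]? = some false := by
      rw [← hgetB]
      have : L + (s₀ + 1) = t₀ + 1 := by omega
      rw [this]; exact hw2
    -- uniqueness of descents in B
    have huniq : ∀ s : ℕ, B[s]? = some true → B[s + 1]? = some false → s = s₀ := by
      intro s h1 h2
      by_contra hne
      have hw1' : w[L + s]? = some true := by rw [hgetB]; exact h1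
      have hw2' : w[L + s + 1]? = some false := by
        have : L + s + 1 = L + (s + 1) := by omega
        rw [this, hgetB]; exact h2
      have hcol : (w.take (L + s + 2)).count false > N - i := by
        have he : L + s + 2 = L + (s + 2) := by omega
        rw [he, hcountB]
        have hmem : false ∈ B.take (s + 2) := by
          refine mem_iff_getElem?.mpr ⟨s + 1, ?_⟩
          rw [getElem?_take, if_pos (by omega)]
          exact h2
        have := count_pos_iff.mpr hmem
        omega
      have hccol : (w.take (L + s + 2)).count false ≠ c := by
        rcases Nat.lt_trichotomy (L + s) t₀ with h | h | h
        · have := corner_lt hw1' hw2' hw1 hw2 h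
          omega
        · exact absurd (by omega : s = s₀) hne
        · have := corner_lt hw1 hw2 hw1' hw2' h
          omega
      have := hall _ ⟨L + s, hw1', hw2', rfl⟩ hccol
      omega
    -- decompose B
    set C := B.take (s₀ + 1) with hC
    set D := B.drop (s₀ + 1) with hD
    have hCD : B = C ++ D := (take_append_drop _ _).symm
    have hDne : D ≠ [] := by
      have hlt : s₀ + 1 < B.length := by
        by_contra hge
        rw [getElem?_eq_none (by omega)] at hB2
        simp at hB2
      intro h
      rw [hD] at h
      have := drop_eq_nil_iff.mp h
      omega
    have hDlast : D.getLast? = some false := by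
      rw [hCD, getLast?_append, getLast?_eq_getLast hDne] at hBlast
      rw [getLast?_eq_getLast hDne]
      simpa using hBlast
    have hDall : ∀ x ∈ D, x = false := by
      intro x hx
      cases x
      · rfl
      · exfalso
        obtain ⟨u, hu1, hu2⟩ := exists_descent D hx hDlast
        rw [hD, getElem?_drop] at hu1 hu2
        have h1 : B[s₀ + 1 + u]? = some true := hu1
        have h2 : B[s₀ + 1 + u + 1]? = some false := by
          have : s₀ + 1 + (u + 1) = s₀ + 1 + u + 1 := by omega
          rw [← this]; exact hu2
        have := huniq _ h1 h2
        omega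
    have hDrep : D = replicate D.length false := eq_replicate_iff.mpr ⟨rfl, hDall⟩
    have hCnd : ∀ s : ℕ, ¬(C[s]? = some true ∧ C[s + 1]? = some false) := by
      rintro s ⟨h1, h2⟩
      have hs1 : s + 1 < s₀ + 1 := by
        by_contra hge
        rw [hC, getElem?_take, if_neg (by omega)] at h2
        simp at h2
      rw [hC, getElem?_take, if_pos (by omega)] at h1
      rw [hC, getElem?_take, if_pos (by omega)] at h2
      have := huniq s h1 h2
      omega
    have hCrep := no_descent C hCnd
    have hCtrue : 1 ≤ C.count true := by
      refine count_pos_iff.mpr ?_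
      refine mem_iff_getElem?.mpr ⟨s₀, ?_⟩
      rw [hC, getElem?_take, if_pos (by omega)]
      exact hB1
    refine ⟨A, C.count false, C.count true, D.length, ?_, hAc, hAl, ?_, hCtrue, ?_⟩
    · rw [hsplit, hCD]
      conv_lhs => rw [hCrep, hDrep]
      simp [append_assoc]
    · have : B.count false = C.count false + D.count false := by rw [hCD, count_append]
      have hDc : D.count false = D.length := by
        conv_lhs => rw [hDrep]
        simp
      omega
    · have := length_pos_iff.mpr hDne
      omega
  · rintro ⟨A, p, g, r, hdecomp, hAc, hAl, hpr, hg, hr⟩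
    set L := A.length with hL
    set t₀ := L + p + (g - 1) with ht₀
    have hc1 : w[t₀]? = some true := by
      rw [hdecomp, getElem_regions, if_neg (by omega), if_neg (by omega), if_pos (by omega)]
    have hc2 : w[t₀ + 1]? = some false := by
      rw [hdecomp, getElem_regions, if_neg (by omega), if_neg (by omega), if_neg (by omega),
        if_pos (by omega)]
    have ht₀2 : t₀ + 2 = L + p + g + 1 := by omega
    have hccount : (w.take (t₀ + 2)).count false = (N - i) + p + 1 := by
      rw [ht₀2, hdecomp, count_false_take_regions A p g r hr, hAc]
    refine ⟨(N - i) + p + 1, ⟨t₀, hc1, hc2, hccount.symm⟩, by omega, ?_⟩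
    rintro c' ⟨t', h1', h2', hc'⟩ hne
    rcases Nat.lt_or_ge t' L with hLt | hLt
    · rcases Nat.lt_or_ge (t' + 2) (L + 1) with h | h
      · -- t' + 2 ≤ L
        have hsub : w.take (t' + 2) <+ A := by
          rw [hdecomp, append_assoc, append_assoc, take_append,
            Nat.sub_eq_zero_of_le (by omega), take_zero, append_nil]
          exact take_sublist _ _
        have := hsub.count_le false
        omega
      · -- t' = L - 1
        exfalso
        have hAne : A ≠ [] := by
          intro hA
          rw [hA] at hL
          simp [hL] at hLt
        have : w[t']? = some false := by
          rw [hdecomp, append_assoc, append_assoc, getElem?_append_left (by omega)]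
          have he : t' = L - 1 := by omega
          rw [he, ← getLast?_eq_getElem?, getLast?_eq_getLast hAne, hAl hAne]
        rw [this] at h1'
        simp at h1'
    · exfalso
      rw [hdecomp, getElem_regions] at h1' h2'
      rw [if_neg (by omega)] at h1'
      rcases Nat.lt_or_ge t' (L + p) with h | h
      · rw [if_pos (by omega)] at h1'
        simp at h1'
      rw [if_neg (by omega)] at h1'
      rcases Nat.lt_or_ge t' (L + p + g) with h3 | h3
      · rw [if_pos (by omega)] at h1'
        -- need t' = t₀, giving c' = c
        rcases Nat.lt_or_ge (t' + 1) (L + p + g) with h4 | h4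
        · rw [if_neg (by omega), if_neg (by omega), if_pos (by omega)] at h2'
          simp at h2'
        · have : t' = t₀ := by omega
          rw [this] at hc'
          rw [hc'] at hne
          exact hne hccount
      · rw [if_neg (by omega)] at h1'
        split_ifs at h1' <;> simp at h1'


lemma g_le_r {N : ℕ} {w A : List Bool} {p g r : ℕ} (hw : IsDyck N w)
    (hdecomp : w = A ++ replicate p false ++ replicate g true ++ replicate r false) : g ≤ r := by
  obtain ⟨hlen, hcnt, hpd⟩ := hw
  have h1 := hpd (A.length + p)
  have he : w.take (A.length + p) = A ++ replicate p false := by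
    have h2 : A ++ replicate p false ++ replicate g true ++ replicate r false
        = (A ++ replicate p false) ++ (replicate g true ++ replicate r false) := by
      simp [append_assoc]
    rw [hdecomp, h2, take_left' (by simp)]
  rw [he] at h1
  simp only [count_append, count_replicate] at h1
  norm_num at h1
  have hct : w.count true = A.count true + g := by
    rw [hdecomp]; simp [count_append, count_replicate]
  have hcf : w.count false = A.count false + (p + r) := by
    rw [hdecomp]; simp [count_append, count_replicate]
  have hfw := count_fa w
  omega

def tc (w : List Bool) : ℕ := (w.reverse.takeWhile (fun b => b == false)).length

lemma takeWhile_rep (s : ℕ) (l : List Bool) :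
    (replicate s false ++ (true :: l)).takeWhile (fun b => b == false) = replicate s false := by
  induction s with
  | zero => simp
  | succ n ih =>
    rw [replicate_succ, cons_append, takeWhile_cons_of_pos (by simp), ih]

lemma tc_eq (x : List Bool) (s : ℕ) : tc (x ++ true :: replicate s false) = s := by
  unfold tc
  rw [reverse_append, reverse_cons, reverse_replicate, append_assoc, singleton_append,
    takeWhile_rep, length_replicate]

lemma rep_split_last (g : ℕ) (hg : 1 ≤ g) :
    replicate g true = replicate (g - 1) true ++ [true] := by
  conv_lhs => rw [show g = (g - 1) + 1 by omega]
  rw [replicate_add, replicate_one]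

lemma inr_image {w' A : List Bool} {p g r : ℕ} (hg : 1 ≤ g)
    (hd : w' = A ++ replicate p false ++ replicate g true ++ replicate r false) :
    w'.take (w'.length - (tc w' + 1)) ++ true :: true :: replicate (tc w' + 1) false
      = A ++ replicate p false ++ replicate (g + 1) true ++ replicate (r + 1) false
    ∧ tc w' = r := by
  set X := A ++ replicate p false ++ replicate (g - 1) true with hX
  have h1 : w' = X ++ (true :: replicate r false) := by
    rw [hd, hX]
    rw [rep_split_last g hg]
    simp [append_assoc]
  have htc : tc w' = r := by rw [h1]; exact tc_eq _ r
  have hlenX : X.length = w'.length - (r + 1) := by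
    have h3 : w'.length = X.length + (r + 1) := by
      rw [h1]
      simp
    omega
  have htake : w'.take (w'.length - (tc w' + 1)) = X := by
    rw [htc, ← hlenX, h1, take_left]
  refine ⟨?_, htc⟩
  rw [htake, htc, hX]
  have h2 : replicate (g + 1) true = replicate (g - 1) true ++ [true, true] := by
    have he : g + 1 = (g - 1) + 2 := by omega
    rw [he, replicate_add]
    rfl
  rw [h2]
  simp [append_assoc, replicate_succ]


lemma finite_aux (n : ℕ) (Q : List Bool → Prop) (hQ : ∀ w, Q w → w.length = n) :
    Finite {w : List Bool // Q w} := by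
  have h : {w : List Bool | Q w} ⊆ {w : List Bool | w.length = n} := fun w hw => hQ w hw
  exact ((List.finite_length_eq Bool n).subset h).to_subtype

def boolToStep : Bool → DyckStep := fun b => bif b then DyckStep.U else DyckStep.D
def stepToBool : DyckStep → Bool := fun s => match s with
  | DyckStep.U => true
  | DyckStep.D => false

lemma bts_inj : Function.Injective boolToStep := by
  intro a b h
  cases a <;> cases b <;> simp [boolToStep] at h ⊢

lemma stb_inj : Function.Injective stepToBool := by
  intro a b h
  cases a <;> cases b <;> simp [stepToBool] at h ⊢

lemma stb_bts (l : List Bool) : (l.map boolToStep).map stepToBool = l := by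
  rw [map_map, show stepToBool ∘ boolToStep = id from funext (fun b => by cases b <;> rfl), map_id]

lemma bts_stb (l : List DyckStep) : (l.map stepToBool).map boolToStep = l := by
  rw [map_map, show boolToStep ∘ stepToBool = id from funext (fun s => by cases s <;> rfl), map_id]

lemma count_true_of_dyck {N : ℕ} {w : List Bool} (hw : IsDyck N w) : w.count true = N := by
  have := count_fa w
  obtain ⟨h1, h2, _⟩ := hw
  omega

def dyckEquiv (n : ℕ) : {u : List Bool // IsDyck n u} ≃ {p : DyckWord // p.semilength = n} where
  toFun u := ⟨⟨u.val.map boolToStep, by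
      rw [show DyckStep.U = boolToStep true from rfl, show DyckStep.D = boolToStep false from rfl,
        count_map_of_injective _ _ bts_inj, count_map_of_injective _ _ bts_inj,
        count_true_of_dyck u.prop, u.prop.2.1], by
      intro t
      rw [← map_take,
        show DyckStep.U = boolToStep true from rfl, show DyckStep.D = boolToStep false from rfl,
        count_map_of_injective _ _ bts_inj, count_map_of_injective _ _ bts_inj]
      exact u.prop.2.2 t⟩, by
      show (u.val.map boolToStep).count DyckStep.U = n
      rw [show DyckStep.U = boolToStep true from rfl, count_map_of_injective _ _ bts_inj,
        count_true_of_dyck u.prop]⟩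
  invFun p := ⟨p.val.toList.map stepToBool, by
      refine ⟨?_, ?_, ?_⟩
      · rw [length_map, ← p.val.two_mul_semilength_eq_length, p.prop]
      · rw [show false = stepToBool DyckStep.D from rfl,
          count_map_of_injective _ _ stb_inj, ← DyckWord.semilength_eq_count_D, p.prop]
      · intro t
        rw [← map_take,
          show false = stepToBool DyckStep.D from rfl, show true = stepToBool DyckStep.U from rfl,
          count_map_of_injective _ _ stb_inj, count_map_of_injective _ _ stb_inj]
        exact p.val.count_D_le_count_U t⟩
  left_inv u := Subtype.ext (stb_bts u.val)
  right_inv p := Subtype.ext (DyckWord.ext (bts_stb p.val.toList))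

lemma part1 (N : ℕ) (hN : 1 ≤ N) :
    Nat.card {w : List Bool // IsDyck N w ∧ WinCol (N - 1) w} = catalan (N - 1) := by
  classical
  let f : {u : List Bool // IsDyck (N - 1) u} → {w : List Bool // IsDyck N w ∧ WinCol (N - 1) w} :=
    fun u => ⟨u.val ++ [true, false], by
      obtain ⟨hl, hc, hp⟩ := u.prop
      have hct := count_true_of_dyck u.prop
      have hD : IsDyck N (u.val ++ [true, false]) := by
        refine ⟨?_, ?_, ?_⟩
        · have h1 : (u.val ++ [true, false]).length = u.val.length + 2 := by simp
          omega
        · have h1 : (u.val ++ [true, false]).count false = u.val.count false + 1 := by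
            simp
          omega
        · rw [show u.val ++ [true, false] = (u.val ++ replicate 1 true) ++ replicate 1 false
            by simp]
          refine pd_append_false (pd_append_true hp 1) 1 ?_
          have h2 : (u.val ++ replicate 1 true).count false = u.val.count false := by simp
          have h3 : (u.val ++ replicate 1 true).count true = u.val.count true + 1 := by simp
          omega
      refine ⟨hD, ?_⟩
      refine (winCol_iff hD le_rfl hN).mpr ?_
      rcases eq_or_ne u.val [] with hu | hu
      · refine ⟨[], 0, 1, 1, ?_, ?_, by simp, by omega, le_rfl, le_rfl⟩
        · simp [hu]
        · have hN1 : N = 1 := by rw [hu] at hl; simp at hl; omega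
          simp [hN1]
      · have hN2 : 2 ≤ N := by
          have := length_pos_iff.mpr hu
          omega
        refine ⟨u.val, 0, 1, 1, by simp, hc, ?_, by omega, le_rfl, le_rfl⟩
        intro h
        have he := ends_false ⟨hl, hc, hp⟩ (show 1 ≤ N - 1 by omega)
        rw [getLast?_eq_getLast h] at he
        exact Option.some.inj he⟩
  have hinj : Function.Injective f := by
    intro u₁ u₂ h
    have h' := congrArg Subtype.val h
    simp only [f] at h'
    exact Subtype.ext ((append_inj h' (by rw [u₁.prop.1, u₂.prop.1])).1)
  have hsurj : Function.Surjective f := by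
    rintro ⟨w, hD, hW⟩
    obtain ⟨A, p, g, r, hdec, hAc, hAl, hpr, hg, hr⟩ := (winCol_iff hD le_rfl hN).mp hW
    have hgr := g_le_r hD hdec
    have hr1 : r = 1 := by omega
    have hp0 : p = 0 := by omega
    have hg1 : g = 1 := by omega
    subst hr1; subst hp0; subst hg1
    have hw_eq : w = A ++ [true, false] := by
      rw [hdec]; simp
    have hAD : IsDyck (N - 1) A := by
      refine ⟨?_, hAc, pd_of_prefix ⟨[true, false], hw_eq.symm⟩ hD.2.2⟩
      have h1 := hD.1
      rw [hw_eq] at h1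
      simp at h1
      omega
    exact ⟨⟨A, hAD⟩, Subtype.ext hw_eq.symm⟩
  have hcard := Nat.card_congr (Equiv.ofBijective f ⟨hinj, hsurj⟩)
  rw [← hcard, Nat.card_congr (dyckEquiv (N - 1)), Nat.card_eq_fintype_card,
    DyckWord.card_dyckWord_semilength_eq_catalan]


lemma shape4 (A : List Bool) (p g r : ℕ) :
    A ++ replicate p false ++ replicate (g + 1) true ++ replicate r false
      = (A ++ replicate p false ++ replicate g true) ++ true :: replicate r false := by
  rw [replicate_add, replicate_one]
  simp [append_assoc]

lemma shape_inl (P : List Bool) (a b : ℕ) :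
    P ++ replicate a false ++ true :: replicate b false
      = P ++ replicate a false ++ replicate 1 true ++ replicate b false := by
  simp [append_assoc]

/-- well-definedness of the `inl` part of the bijection -/
lemma inl_good {N i : ℕ} (h2i : 2 ≤ i) (hiN : i ≤ N - 1) (r' : ℕ) (hr' : r' < i)
    (P : List Bool) (hPl : P.length = (N - 1 - i) + (N - 1)) (hPc : P.count false = N - 1 - i)
    (hPp : IsPrefixDyck P) :
    IsDyck N (P ++ replicate (i - r') false ++ true :: replicate (r' + 1) false) ∧
    WinCol (N - i) (P ++ replicate (i - r') false ++ true :: replicate (r' + 1) false) := by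
  have hN3 : 3 ≤ N := by omega
  have hPt : P.count true = N - 1 := by
    have := count_fa P
    omega
  have hD : IsDyck N (P ++ replicate (i - r') false ++ true :: replicate (r' + 1) false) := by
    refine ⟨?_, ?_, ?_⟩
    · simp only [length_append, length_cons, length_replicate]
      omega
    · simp only [count_append, count_replicate, count_cons]
      norm_num
      omega
    · rw [shape_inl]
      rw [show P ++ replicate (i - r') false ++ replicate 1 true ++ replicate (r' + 1) false
        = ((P ++ replicate (i - r') false) ++ replicate 1 true) ++ replicate (r' + 1) false
        by simp [append_assoc]]
      refine pd_append_false (pd_append_true (pd_append_false hPp _ (by omega)) 1) _ ?_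
      simp only [count_append, count_replicate]
      norm_num
      omega
  refine ⟨hD, ?_⟩
  refine (winCol_iff hD (by omega) (by omega)).mpr ?_
  refine ⟨P ++ [false], i - r' - 1, 1, r' + 1, ?_, ?_, ?_, by omega, le_rfl, by omega⟩
  · rw [shape_inl]
    have h1 : replicate (i - r') false = [false] ++ replicate (i - r' - 1) false := by
      conv_lhs => rw [show i - r' = 1 + (i - r' - 1) by omega]
      rw [replicate_add, replicate_one]
    rw [h1]
    simp [append_assoc]
  · simp only [count_append, count_cons, count_nil]
    norm_num
    omega
  · intro h
    have h1 : (P ++ [false]).getLast? = some false := by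
      rw [getLast?_append]
      simp
    rw [getLast?_eq_getLast h] at h1
    exact Option.some.inj h1

/-- well-definedness of the `inr` part -/
lemma inr_good {N i : ℕ} (h2i : 2 ≤ i) (hiN : i ≤ N - 1) {w' A : List Bool} {p g r : ℕ}
    (hD : IsDyck (N - 1) w')
    (hd : w' = A ++ replicate p false ++ replicate g true ++ replicate r false)
    (hAc : A.count false = N - i) (hAl : ∀ h : A ≠ [], A.getLast h = false)
    (hpr : p + r = i - 1) (hg : 1 ≤ g) (hr : 1 ≤ r) :
    IsDyck N (A ++ replicate p false ++ replicate (g + 1) true ++ replicate (r + 1) false) ∧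
    WinCol (N - i)
      (A ++ replicate p false ++ replicate (g + 1) true ++ replicate (r + 1) false) := by
  have hN3 : 3 ≤ N := by omega
  have hlw : A.length + p + g + r = 2 * (N - 1) := by
    have h1 := hD.1
    rw [hd] at h1
    simp only [length_append, length_replicate] at h1
    omega
  have hcf : A.count false + p + r = N - 1 := by
    have h1 := hD.2.1
    rw [hd] at h1
    simp only [count_append, count_replicate] at h1
    norm_num at h1
    omega
  have hct : A.count true + g = N - 1 := by
    have h1 := count_true_of_dyck hD
    rw [hd] at h1
    simp only [count_append, count_replicate] at h1
    norm_num at h1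
    omega
  have hbase : IsPrefixDyck (A ++ replicate p false) :=
    pd_of_prefix ⟨replicate g true ++ replicate r false, by rw [hd]; simp [append_assoc]⟩ hD.2.2
  have hDN : IsDyck N
      (A ++ replicate p false ++ replicate (g + 1) true ++ replicate (r + 1) false) := by
    refine ⟨?_, ?_, ?_⟩
    · simp only [length_append, length_replicate]
      omega
    · simp only [count_append, count_replicate]
      norm_num
      omega
    · rw [show A ++ replicate p false ++ replicate (g + 1) true ++ replicate (r + 1) false
        = ((A ++ replicate p false) ++ replicate (g + 1) true) ++ replicate (r + 1) false
        by simp [append_assoc]]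
      refine pd_append_false (pd_append_true hbase (g + 1)) _ ?_
      simp only [count_append, count_replicate]
      norm_num
      omega
  refine ⟨hDN, (winCol_iff hDN (by omega) (by omega)).mpr ?_⟩
  exact ⟨A, p, g + 1, r + 1, rfl, hAc, hAl, by omega, by omega, by omega⟩

/-- packaged decomposition for an element of `S' = S_{i-1}(N-1)` -/
lemma inr_spec {N i : ℕ} (h2i : 2 ≤ i) (hiN : i ≤ N - 1) {w' : List Bool}
    (hD : IsDyck (N - 1) w') (hW : WinCol (N - i) w') :
    ∃ A p g r, (w' = A ++ replicate p false ++ replicate g true ++ replicate r false) ∧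
      A.count false = N - i ∧ (∀ h : A ≠ [], A.getLast h = false) ∧
      p + r = i - 1 ∧ 1 ≤ g ∧ 1 ≤ r ∧ tc w' = r ∧
      (w'.take (w'.length - (tc w' + 1)) ++ true :: true :: replicate (tc w' + 1) false
        = A ++ replicate p false ++ replicate (g + 1) true ++ replicate (r + 1) false) := by
  have h1 : 1 ≤ i - 1 := by omega
  have h2 : i - 1 ≤ N - 1 := by omega
  have h3 : (N - 1) - (i - 1) = N - i := by omega
  have hiff := winCol_iff hD h1 h2
  rw [h3] at hiff
  obtain ⟨A, p, g, r, hd, hAc, hAl, hpr, hg, hr⟩ := hiff.mp hW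
  obtain ⟨him, htc⟩ := inr_image hg hd
  exact ⟨A, p, g, r, hd, hAc, hAl, hpr, hg, hr, htc, him⟩

/-- images of the two branches are distinct -/
lemma inl_ne_inr {P A : List Bool} {a b p g r : ℕ} (ha : 1 ≤ a) (hg : 1 ≤ g) :
    P ++ replicate a false ++ true :: replicate (b + 1) false ≠
      A ++ replicate p false ++ replicate (g + 1) true ++ replicate (r + 1) false := by
  intro hv
  have htcL : tc (P ++ replicate a false ++ true :: replicate (b + 1) false) = b + 1 :=
    tc_eq _ _
  have htcR : tc (A ++ replicate p false ++ replicate (g + 1) true ++ replicate (r + 1) false)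
      = r + 1 := by
    rw [shape4]
    exact tc_eq _ _
  have hbr : b = r := by
    have h1 := congrArg tc hv
    rw [htcL, htcR] at h1
    omega
  have hlenv := congrArg List.length hv
  simp only [length_append, length_cons, length_replicate] at hlenv
  have hL : (P ++ replicate a false ++ true :: replicate (b + 1) false)[P.length + a - 1]?
      = some false := by
    rw [shape_inl, getElem_regions, if_neg (by omega), if_pos (by omega)]
  have hR : (A ++ replicate p false ++ replicate (g + 1) true
      ++ replicate (r + 1) false)[P.length + a - 1]? = some true := by
    rw [getElem_regions, if_neg (by omega), if_neg (by omega), if_pos (by omega)]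
  rw [hv, hR] at hL
  exact absurd hL (by simp)

lemma part2 (N i : ℕ) (h2i : 2 ≤ i) (hiN : i ≤ N - 1) :
    Nat.card {w : List Bool // IsDyck N w ∧ WinCol (N - i) w} =
      i * Nat.card {w : List Bool // w.length = (N - 1 - i) + (N - 1) ∧
          w.count false = N - 1 - i ∧ IsPrefixDyck w} +
      Nat.card {w : List Bool // IsDyck (N - 1) w ∧ WinCol (N - i) w} := by
  classical
  have hN3 : 3 ≤ N := by omega
  let Tsub := {w : List Bool // w.length = (N - 1 - i) + (N - 1) ∧
      w.count false = N - 1 - i ∧ IsPrefixDyck w}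
  let Ssub := {w : List Bool // IsDyck N w ∧ WinCol (N - i) w}
  let Ssub' := {w : List Bool // IsDyck (N - 1) w ∧ WinCol (N - i) w}
  let f : (Fin i × Tsub) ⊕ Ssub' → Ssub := fun x =>
    match x with
    | Sum.inl (r', P) =>
        ⟨P.val ++ replicate (i - r'.val) false ++ true :: replicate (r'.val + 1) false,
          inl_good h2i hiN r'.val r'.isLt P.val P.prop.1 P.prop.2.1 P.prop.2.2⟩
    | Sum.inr w' =>
        ⟨w'.val.take (w'.val.length - (tc w'.val + 1))
            ++ true :: true :: replicate (tc w'.val + 1) false, by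
          obtain ⟨A, p, g, r, hd, hAc, hAl, hpr, hg, hr, htc, him⟩ :=
            inr_spec h2i hiN w'.prop.1 w'.prop.2
          rw [him]
          exact inr_good h2i hiN w'.prop.1 hd hAc hAl hpr hg hr⟩
  have hinj : Function.Injective f := by
    rintro (⟨r₁, P₁⟩ | w₁) (⟨r₂, P₂⟩ | w₂) h
    · have hv := congrArg Subtype.val h
      simp only [f] at hv
      have ht1 := tc_eq (P₁.val ++ replicate (i - r₁.val) false) (r₁.val + 1)
      have ht2 := tc_eq (P₂.val ++ replicate (i - r₂.val) false) (r₂.val + 1)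
      have hrr : r₁.val = r₂.val := by
        have h1 := congrArg tc hv
        rw [ht1, ht2] at h1
        omega
      rw [append_assoc P₁.val, append_assoc P₂.val, hrr] at hv
      have hP12 : P₁.val = P₂.val :=
        (append_inj hv (by rw [P₁.prop.1, P₂.prop.1])).1
      have : r₁ = r₂ := Fin.ext hrr
      subst this
      rw [Sum.inl.injEq, Prod.mk.injEq]
      exact ⟨rfl, Subtype.ext hP12⟩
    · exfalso
      have hv := congrArg Subtype.val h
      simp only [f] at hv
      obtain ⟨A, p, g, r, hd, hAc, hAl, hpr, hg, hr, htc, him⟩ :=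
        inr_spec h2i hiN w₂.prop.1 w₂.prop.2
      rw [him] at hv
      exact inl_ne_inr (by omega) hg hv
    · exfalso
      have hv := congrArg Subtype.val h
      simp only [f] at hv
      obtain ⟨A, p, g, r, hd, hAc, hAl, hpr, hg, hr, htc, him⟩ :=
        inr_spec h2i hiN w₁.prop.1 w₁.prop.2
      rw [him] at hv
      exact inl_ne_inr (by omega) hg hv.symm
    · have hv := congrArg Subtype.val h
      simp only [f] at hv
      obtain ⟨A₁, p₁, g₁, r₁, hd₁, hAc₁, hAl₁, hpr₁, hg₁, hr₁, htc₁, him₁⟩ :=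
        inr_spec h2i hiN w₁.prop.1 w₁.prop.2
      obtain ⟨A₂, p₂, g₂, r₂, hd₂, hAc₂, hAl₂, hpr₂, hg₂, hr₂, htc₂, him₂⟩ :=
        inr_spec h2i hiN w₂.prop.1 w₂.prop.2
      rw [him₁, him₂, shape4, shape4] at hv
      have hrr : r₁ = r₂ := by
        have h1 := congrArg tc hv
        rw [tc_eq, tc_eq] at h1
        omega
      have hlenv := congrArg List.length hv
      simp only [length_append, length_cons, length_replicate] at hlenv
      have hX : A₁ ++ replicate p₁ false ++ replicate g₁ true
          = A₂ ++ replicate p₂ false ++ replicate g₂ true := by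
        refine (append_inj hv ?_).1
        simp only [length_append, length_replicate]
        omega
      have hw12 : w₁.val = w₂.val := by
        rw [hd₁, hd₂, hX, hrr]
      rw [Sum.inr.injEq]
      exact Subtype.ext hw12
  have hsurj : Function.Surjective f := by
    rintro ⟨w, hD, hW⟩
    obtain ⟨A, p, g, r, hd, hAc, hAl, hpr, hg, hr⟩ :=
      (winCol_iff hD (by omega) (by omega)).mp hW
    have hgr := g_le_r hD hd
    have hAne : A ≠ [] := by
      intro hA
      rw [hA] at hAc
      simp at hAc
      omega
    have hlw : A.length + p + g + r = 2 * N := by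
      have h1 := hD.1
      rw [hd] at h1
      simp only [length_append, length_replicate] at h1
      omega
    rcases Nat.eq_or_lt_of_le hg with hg1 | hg2
    · -- g = 1 : comes from inl
      have hg1' : g = 1 := hg1.symm
      subst hg1'
      have hAdec : A.dropLast ++ [false] = A := by
        conv_rhs => rw [← dropLast_append_getLast hAne]
        rw [hAl hAne]
      have hPc : A.dropLast.count false = N - 1 - i := by
        have h1 : A.count false = A.dropLast.count false + 1 := by
          conv_lhs => rw [← hAdec]
          simp
        omega
      have hPl : A.dropLast.length = (N - 1 - i) + (N - 1) := by
        have h1 : A.length = A.dropLast.length + 1 := by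
          conv_lhs => rw [← hAdec]
          simp
        omega
      have hPp : IsPrefixDyck A.dropLast := by
        refine pd_of_prefix ?_ hD.2.2
        refine IsPrefix.trans ⟨[false], hAdec⟩ ?_
        exact ⟨replicate p false ++ replicate 1 true ++ replicate r false, by
          rw [hd]; simp [append_assoc]⟩
      refine ⟨Sum.inl (⟨r - 1, by omega⟩, ⟨A.dropLast, hPl, hPc, hPp⟩), ?_⟩
      apply Subtype.ext
      show A.dropLast ++ replicate (i - (r - 1)) false ++ true :: replicate ((r - 1) + 1) false = w
      have he1 : i - (r - 1) = 1 + p := by omega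
      have he2 : (r - 1) + 1 = r := by omega
      rw [he1, he2, replicate_add, replicate_one, hd]
      conv_rhs => rw [← hAdec]
      simp [append_assoc, replicate_one]
    · -- g ≥ 2 : comes from inr
      have hr2 : 2 ≤ r := by omega
      have e1 : p + (r - 1) = i - 1 := by omega
      have e2 : 1 ≤ g - 1 := by omega
      have e3 : 1 ≤ r - 1 := by omega
      set w' := A ++ replicate p false ++ replicate (g - 1) true ++ replicate (r - 1) false
        with hw'
      have hbase : IsPrefixDyck (A ++ replicate p false) :=
        pd_of_prefix ⟨replicate g true ++ replicate r false, by rw [hd]; simp [append_assoc]⟩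
          hD.2.2
      have hcf : A.count false + p + r = N := by
        have h1 := hD.2.1
        rw [hd] at h1
        simp only [count_append, count_replicate] at h1
        norm_num at h1
        omega
      have hct : A.count true + g = N := by
        have h1 := count_true_of_dyck hD
        rw [hd] at h1
        simp only [count_append, count_replicate] at h1
        norm_num at h1
        omega
      have hD' : IsDyck (N - 1) w' := by
        refine ⟨?_, ?_, ?_⟩
        · rw [hw']
          simp only [length_append, length_replicate]
          omega
        · rw [hw']
          simp only [count_append, count_replicate]
          norm_num
          omega
        · rw [hw', show A ++ replicate p false ++ replicate (g - 1) true
              ++ replicate (r - 1) false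
            = ((A ++ replicate p false) ++ replicate (g - 1) true) ++ replicate (r - 1) false
            by simp [append_assoc]]
          refine pd_append_false (pd_append_true hbase (g - 1)) _ ?_
          simp only [count_append, count_replicate]
          norm_num
          omega
      have hW' : WinCol (N - i) w' := by
        have h1 : 1 ≤ i - 1 := by omega
        have h2 : i - 1 ≤ N - 1 := by omega
        have h3 : (N - 1) - (i - 1) = N - i := by omega
        have hiff := winCol_iff hD' h1 h2
        rw [h3] at hiff
        exact hiff.mpr ⟨A, p, g - 1, r - 1, rfl, hAc, hAl, e1, e2, e3⟩
      refine ⟨Sum.inr ⟨w', hD', hW'⟩, ?_⟩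
      apply Subtype.ext
      show w'.take (w'.length - (tc w' + 1)) ++ true :: true :: replicate (tc w' + 1) false = w
      obtain ⟨him, htc⟩ := inr_image (show 1 ≤ g - 1 by omega) hw'
      rw [him, hd, show (g - 1) + 1 = g by omega, show (r - 1) + 1 = r by omega]
  haveI : Finite Tsub := finite_aux ((N - 1 - i) + (N - 1)) _ (fun w hw => hw.1)
  haveI : Finite Ssub := finite_aux (2 * N) _ (fun w hw => hw.1.1)
  haveI : Finite Ssub' := finite_aux (2 * (N - 1)) _ (fun w hw => hw.1.1)
  calc Nat.card Ssub
      = Nat.card ((Fin i × Tsub) ⊕ Ssub') :=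
        (Nat.card_congr (Equiv.ofBijective f ⟨hinj, hsurj⟩)).symm
    _ = Nat.card (Fin i × Tsub) + Nat.card Ssub' := Nat.card_sum
    _ = i * Nat.card Tsub + Nat.card Ssub' := by
        rw [Nat.card_prod, Nat.card_eq_fintype_card, Fintype.card_fin]


end SRecAux

/-- `S_1(N) = C_{N-1}` and `S_i(N) = i·T_i(N) + S_{i-1}(N-1)` for `2 ≤ i ≤ N-1`. -/
theorem S_recurrence (N : ℕ) :
    (1 ≤ N → S 1 N = catalan (N - 1)) ∧
    (∀ i : ℕ, 2 ≤ i → i ≤ N - 1 → S i N = i * T i N + S (i - 1) (N - 1)) := by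
  constructor
  · intro hN
    exact SRecAux.part1 N hN
  · intro i h2i hiN
    unfold S T partialDyckCount
    have h3 : N - 1 - (i - 1) = N - i := by omega
    rw [h3]
    exact SRecAux.part2 N i h2i hiN
end

section
/- For all i with 1 ≤ i ≤ N-5, the number T_i(N) of partial Dyck paths from (0,0) to (N-1-i, N-1) satisfies T_i(N)/C_N ≤ (1/3)·(3/4)^{i-1}. -/
namespace PDAux

/-- The set of partial Dyck words to `(a,b)`. -/
def S (a b : ℕ) : Set (List Bool) :=
  {w | w.length = a + b ∧ w.count false = a ∧ IsPrefixDyck w}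

lemma count_false_add_count_true (w : List Bool) :
    w.count false + w.count true = w.length := by
  induction w with
  | nil => simp
  | cons x l ih => cases x <;> simp [List.count_cons] <;> omega

lemma S_finite (a b : ℕ) : (S a b).Finite :=
  (List.finite_length_eq Bool (a + b)).subset fun _ hw => hw.1

lemma pdc_eq_ncard (a b : ℕ) : partialDyckCount a b = (S a b).ncard := by
  rw [partialDyckCount, ← Nat.card_coe_set_eq]
  rfl

lemma pdc_eq_zero {a b : ℕ} (h : b < a) : partialDyckCount a b = 0 := by
  rw [partialDyckCount]
  have : IsEmpty {w : List Bool // w.length = a + b ∧ w.count false = a ∧ IsPrefixDyck w} := by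
    constructor
    rintro ⟨w, hlen, hcf, hd⟩
    have h1 := hd (a + b)
    rw [List.take_of_length_le (by omega)] at h1
    have h2 := count_false_add_count_true w
    omega
  simp

lemma pdc_zero (b : ℕ) : partialDyckCount 0 b = 1 := by
  rw [partialDyckCount]
  haveI hne : Nonempty {w : List Bool // w.length = 0 + b ∧ w.count false = 0 ∧ IsPrefixDyck w} := by
    refine ⟨⟨List.replicate b true, by simp, by simp [List.count_replicate], ?_⟩⟩
    intro t
    simp [List.count_replicate]
  haveI hsub : Subsingleton {w : List Bool // w.length = 0 + b ∧ w.count false = 0 ∧ IsPrefixDyck w} := by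
    constructor
    rintro ⟨w, hw1, hw2, hw3⟩ ⟨v, hv1, hv2, hv3⟩
    have hw : ∀ u : List Bool, u.length = 0 + b → u.count false = 0 → u = List.replicate b true := by
      intro u h1 h2
      rw [List.eq_replicate_iff]
      refine ⟨by omega, fun x hx => ?_⟩
      cases x
      · exact absurd hx (List.count_eq_zero.mp h2)
      · rfl
    simp only [Subtype.mk_eq_mk]
    rw [hw w hw1 hw2, hw v hv1 hv2]
  exact Nat.card_unique

lemma isPrefixDyck_concat {u : List Bool} {x : Bool} :
    IsPrefixDyck (u ++ [x]) ↔
      IsPrefixDyck u ∧ (u ++ [x]).count false ≤ (u ++ [x]).count true := by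
  constructor
  · intro h
    refine ⟨fun t => ?_, ?_⟩
    · rcases le_or_gt t u.length with ht | ht
      · have := h t
        rwa [List.take_append_of_le_length ht] at this
      · have := h u.length
        rw [List.take_append_of_le_length le_rfl, List.take_length] at this
        rwa [List.take_of_length_le ht.le]
    · have := h (u.length + 1)
      rwa [List.take_of_length_le (by simp)] at this
  · rintro ⟨h1, h2⟩ t
    rcases le_or_gt t u.length with ht | ht
    · rw [List.take_append_of_le_length ht]
      exact h1 t
    · rwa [List.take_of_length_le (by simp; omega)]

lemma S_split (a b : ℕ) (hab : a ≤ b) :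
    S (a + 1) (b + 1) = ((· ++ [false]) '' S a (b + 1)) ∪ ((· ++ [true]) '' S (a + 1) b) := by
  ext w
  constructor
  · rintro ⟨hlen, hcf, hd⟩
    have hne : w ≠ [] := by
      intro h
      rw [h] at hlen
      simp at hlen
    obtain ⟨u, x, rfl⟩ : ∃ u x, w = u ++ [x] :=
      ⟨w.dropLast, w.getLast hne, (List.dropLast_append_getLast hne).symm⟩
    rw [isPrefixDyck_concat] at hd
    simp only [List.length_append, List.length_singleton] at hlen
    cases x
    · left
      refine ⟨u, ⟨by omega, ?_, hd.1⟩, rfl⟩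
      simp [List.count_append] at hcf
      omega
    · right
      refine ⟨u, ⟨by omega, ?_, hd.1⟩, rfl⟩
      simp [List.count_append] at hcf ⊢
      omega
  · rintro (⟨u, ⟨hl, hc, hd⟩, rfl⟩ | ⟨u, ⟨hl, hc, hd⟩, rfl⟩)
    · have hct := count_false_add_count_true u
      refine ⟨by simp; omega, by simp [List.count_append, hc], ?_⟩
      rw [isPrefixDyck_concat]
      refine ⟨hd, ?_⟩
      simp [List.count_append]
      omega
    · have hct := count_false_add_count_true u
      refine ⟨by simp; omega, by simp [List.count_append, hc], ?_⟩
      rw [isPrefixDyck_concat]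
      refine ⟨hd, ?_⟩
      simp [List.count_append]
      omega

lemma pdc_rec (a b : ℕ) (hab : a ≤ b) :
    partialDyckCount (a + 1) (b + 1) = partialDyckCount a (b + 1) + partialDyckCount (a + 1) b := by
  have hinj1 : Function.Injective (· ++ [false] : List Bool → List Bool) := by
    intro u v h
    simpa using h
  have hinj2 : Function.Injective (· ++ [true] : List Bool → List Bool) := by
    intro u v h
    simpa using h
  rw [pdc_eq_ncard, pdc_eq_ncard, pdc_eq_ncard, S_split a b hab,
    Set.ncard_union_eq ?disj ((S_finite _ _).image _) ((S_finite _ _).image _),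
    Set.ncard_image_of_injective _ hinj1, Set.ncard_image_of_injective _ hinj2]
  case disj =>
    rw [Set.disjoint_left]
    rintro w ⟨u, _, rfl⟩ ⟨v, _, h⟩
    have h1 := congrArg List.getLast? h
    simp [List.getLast?_concat] at h1

lemma key (n : ℕ) : ∀ a b, a + b = n → a ≤ b →
    partialDyckCount a b + n.choose (b + 1) = n.choose a := by
  induction n using Nat.strong_induction_on with
  | _ n ih =>
    intro a b hn hab
    match a, b with
    | 0, b =>
      have hb : n = b := by omega
      subst hb
      simp [pdc_zero, Nat.choose_eq_zero_of_lt]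
    | a + 1, b + 1 =>
      have hr := pdc_rec a b (by omega)
      by_cases hb : a = b
      · subst hb
        obtain rfl : n = a + a + 1 + 1 := by omega
        have hz : partialDyckCount (a + 1) a = 0 := pdc_eq_zero (by omega)
        have h1 := ih (a + a + 1) (by omega) a (a + 1) (by omega) (by omega)
        have p1 : (a + a + 1 + 1).choose (a + 1 + 1) =
            (a + a + 1).choose (a + 1) + (a + a + 1).choose (a + 1 + 1) :=
          Nat.choose_succ_succ _ _
        have p2 : (a + a + 1 + 1).choose (a + 1) =
            (a + a + 1).choose a + (a + a + 1).choose (a + 1) :=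
          Nat.choose_succ_succ _ _
        omega
      · obtain rfl : n = a + b + 1 + 1 := by omega
        have h1 := ih (a + b + 1) (by omega) a (b + 1) (by omega) (by omega)
        have h2 := ih (a + b + 1) (by omega) (a + 1) b (by omega) (by omega)
        have p1 : (a + b + 1 + 1).choose (b + 1 + 1) =
            (a + b + 1).choose (b + 1) + (a + b + 1).choose (b + 1 + 1) :=
          Nat.choose_succ_succ _ _
        have p2 : (a + b + 1 + 1).choose (a + 1) =
            (a + b + 1).choose a + (a + b + 1).choose (a + 1) :=
          Nat.choose_succ_succ _ _
        omega

lemma key2 (a b : ℕ) (hab : a ≤ b) :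
    (b + 1) * partialDyckCount a b + a * (a + b).choose a = (b + 1) * (a + b).choose a := by
  have hk := key (a + b) a b rfl hab
  have hs : (a + b).choose b = (a + b).choose a := by
    have := Nat.choose_symm (n := a + b) (k := a) (by omega)
    rwa [show a + b - a = b by omega] at this
  have h3 : (a + b).choose (b + 1) * (b + 1) = (a + b).choose b * (a + b - b) :=
    Nat.choose_succ_right_eq _ _
  rw [show a + b - b = a by omega, hs] at h3
  calc (b + 1) * partialDyckCount a b + a * (a + b).choose a
      = (b + 1) * partialDyckCount a b + (a + b).choose a * a := by ring
    _ = (b + 1) * partialDyckCount a b + (a + b).choose (b + 1) * (b + 1) := by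
        rw [h3]
    _ = (b + 1) * (partialDyckCount a b + (a + b).choose (b + 1)) := by ring
    _ = (b + 1) * (a + b).choose a := by rw [hk]

lemma mulT (N i : ℕ) (hiN : i + 1 ≤ N) :
    N * T i N = (i + 1) * ((N - 1 - i) + (N - 1)).choose (N - 1 - i) := by
  have hk := key2 (N - 1 - i) (N - 1) (by omega)
  rw [show N - 1 + 1 = N by omega] at hk
  have hsplit : N * ((N - 1 - i) + (N - 1)).choose (N - 1 - i)
      = (i + 1) * ((N - 1 - i) + (N - 1)).choose (N - 1 - i)
        + (N - 1 - i) * ((N - 1 - i) + (N - 1)).choose (N - 1 - i) := by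
    rw [← Nat.add_mul]
    congr 1
    omega
  have : N * T i N + (N - 1 - i) * ((N - 1 - i) + (N - 1)).choose (N - 1 - i)
      = (i + 1) * ((N - 1 - i) + (N - 1)).choose (N - 1 - i)
        + (N - 1 - i) * ((N - 1 - i) + (N - 1)).choose (N - 1 - i) := by
    rw [← hsplit]
    exact hk
  exact Nat.add_right_cancel this

lemma step (N i : ℕ) (h1 : 1 ≤ i) (h2 : i + 1 ≤ N - 5) :
    4 * T (i + 1) N ≤ 3 * T i N := by
  obtain ⟨p, hp, hp4⟩ : ∃ p, N = p + i + 2 ∧ 4 ≤ p := ⟨N - i - 2, by omega, by omega⟩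
  have hT : N * T i N = (i + 1) * ((2 * p + i + 2).choose (p + 1)) := by
    have := mulT N i (by omega)
    rw [show N - 1 - i = p + 1 by omega, show p + 1 + (N - 1) = 2 * p + i + 2 by omega] at this
    exact this
  have hT' : N * T (i + 1) N = (i + 2) * ((2 * p + i + 1).choose p) := by
    have := mulT N (i + 1) (by omega)
    rw [show N - 1 - (i + 1) = p by omega, show p + (N - 1) = 2 * p + i + 1 by omega,
      show i + 1 + 1 = i + 2 by omega] at this
    exact this
  have habs : (2 * p + i + 2) * ((2 * p + i + 1).choose p)
      = (2 * p + i + 2).choose (p + 1) * (p + 1) :=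
    Nat.add_one_mul_choose_eq (2 * p + i + 1) p
  have hcoef : 4 * (i + 2) * (p + 1) ≤ 3 * (i + 1) * (2 * p + i + 2) := by nlinarith
  set c := (2 * p + i + 2).choose (p + 1) with hc
  set c' := (2 * p + i + 1).choose p with hc'
  set m := 2 * p + i + 2 with hm
  have main : m * (N * (4 * T (i + 1) N)) ≤ m * (N * (3 * T i N)) := by
    calc m * (N * (4 * T (i + 1) N)) = 4 * m * (N * T (i + 1) N) := by ring
      _ = 4 * m * ((i + 2) * c') := by rw [hT']
      _ = 4 * (i + 2) * (m * c') := by ring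
      _ = 4 * (i + 2) * (c * (p + 1)) := by rw [habs]
      _ = (4 * (i + 2) * (p + 1)) * c := by ring
      _ ≤ (3 * (i + 1) * m) * c := Nat.mul_le_mul_right _ hcoef
      _ = 3 * m * ((i + 1) * c) := by ring
      _ = 3 * m * (N * T i N) := by rw [hT]
      _ = m * (N * (3 * T i N)) := by ring
  have h5 := Nat.le_of_mul_le_mul_left main (by omega)
  exact Nat.le_of_mul_le_mul_left h5 (by omega)

lemma base (N : ℕ) (hN : 6 ≤ N) : 3 * T 1 N ≤ catalan N := by
  obtain ⟨q, rfl, hq4⟩ : ∃ q, N = q + 2 ∧ 4 ≤ q := ⟨N - 2, by omega, by omega⟩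
  have hT1 : (q + 2) * T 1 (q + 2) = 2 * ((2 * q + 1).choose q) := by
    have := mulT (q + 2) 1 (by omega)
    rw [show q + 2 - 1 - 1 = q by omega, show q + (q + 2 - 1) = 2 * q + 1 by omega] at this
    exact this
  have s1 : (2 * q + 2) * ((2 * q + 1).choose q) = (2 * q + 2).choose (q + 1) * (q + 1) :=
    Nat.add_one_mul_choose_eq (2 * q + 1) q
  have s2 : (2 * q + 3) * ((2 * q + 2).choose (q + 1)) = (2 * q + 3).choose (q + 2) * (q + 2) :=
    Nat.add_one_mul_choose_eq (2 * q + 2) (q + 1)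
  have s3 : (2 * q + 3).choose (q + 2) = (2 * q + 3).choose (q + 1) := by
    have := Nat.choose_symm (n := 2 * q + 3) (k := q + 2) (by omega)
    rw [show 2 * q + 3 - (q + 2) = q + 1 by omega] at this
    exact this.symm
  have s4 : (2 * q + 4) * ((2 * q + 3).choose (q + 1)) = (2 * q + 4).choose (q + 2) * (q + 2) :=
    Nat.add_one_mul_choose_eq (2 * q + 3) (q + 1)
  have hcb : (q + 3) * catalan (q + 2) = (2 * q + 4).choose (q + 2) := by
    have := succ_mul_catalan_eq_centralBinom (q + 2)
    rw [Nat.centralBinom, show 2 * (q + 2) = 2 * q + 4 by omega] at this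
    exact this
  have hCpos : 1 ≤ (2 * q + 4).choose (q + 2) := Nat.choose_pos (by omega)
  have hcoef : 6 * (q + 3) * ((q + 2) * ((q + 2) * (q + 1)))
      ≤ (q + 2) * ((2 * q + 2) * ((2 * q + 3) * (2 * q + 4))) := by
    calc 6 * (q + 3) * ((q + 2) * ((q + 2) * (q + 1)))
        ≤ (4 * (2 * q + 3)) * ((q + 2) * ((q + 2) * (q + 1))) :=
          Nat.mul_le_mul_right _ (by omega)
      _ = (q + 2) * ((2 * q + 2) * ((2 * q + 3) * (2 * q + 4))) := by ring
  set C4 := (2 * q + 4).choose (q + 2) with hC4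
  have main : ((q + 3) * ((2 * q + 2) * ((2 * q + 3) * (2 * q + 4)))) * ((q + 2) * (3 * T 1 (q + 2)))
      ≤ ((q + 3) * ((2 * q + 2) * ((2 * q + 3) * (2 * q + 4)))) * ((q + 2) * catalan (q + 2)) := by
    calc ((q + 3) * ((2 * q + 2) * ((2 * q + 3) * (2 * q + 4)))) * ((q + 2) * (3 * T 1 (q + 2)))
        = 3 * (q + 3) * ((2 * q + 3) * (2 * q + 4)) * ((2 * q + 2) * ((q + 2) * T 1 (q + 2))) := by
          ring
      _ = 3 * (q + 3) * ((2 * q + 3) * (2 * q + 4)) * ((2 * q + 2) * (2 * ((2 * q + 1).choose q))) := by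
          rw [hT1]
      _ = 6 * (q + 3) * ((2 * q + 3) * (2 * q + 4)) * ((2 * q + 2) * ((2 * q + 1).choose q)) := by
          ring
      _ = 6 * (q + 3) * ((2 * q + 3) * (2 * q + 4)) * ((2 * q + 2).choose (q + 1) * (q + 1)) := by
          rw [s1]
      _ = 6 * (q + 3) * ((q + 1) * (2 * q + 4)) * ((2 * q + 3) * ((2 * q + 2).choose (q + 1))) := by
          ring
      _ = 6 * (q + 3) * ((q + 1) * (2 * q + 4)) * ((2 * q + 3).choose (q + 2) * (q + 2)) := by
          rw [s2]
      _ = 6 * (q + 3) * ((q + 1) * (q + 2)) * ((2 * q + 4) * ((2 * q + 3).choose (q + 1))) := by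
          rw [s3]; ring
      _ = 6 * (q + 3) * ((q + 1) * (q + 2)) * (C4 * (q + 2)) := by rw [s4]
      _ = (6 * (q + 3) * ((q + 2) * ((q + 2) * (q + 1)))) * C4 := by ring
      _ ≤ ((q + 2) * ((2 * q + 2) * ((2 * q + 3) * (2 * q + 4)))) * C4 := by
          exact Nat.mul_le_mul_right _ hcoef
      _ = ((2 * q + 2) * ((2 * q + 3) * (2 * q + 4))) * ((q + 2) * C4) := by ring
      _ = ((2 * q + 2) * ((2 * q + 3) * (2 * q + 4))) * ((q + 2) * ((q + 3) * catalan (q + 2))) := by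
          rw [hcb]
      _ = ((q + 3) * ((2 * q + 2) * ((2 * q + 3) * (2 * q + 4)))) * ((q + 2) * catalan (q + 2)) := by
          ring
  have h5 := Nat.le_of_mul_le_mul_left main (by positivity)
  exact Nat.le_of_mul_le_mul_left h5 (by omega)

lemma main_nat (N i : ℕ) (h1 : 1 ≤ i) (h2 : i ≤ N - 5) :
    3 * 4 ^ (i - 1) * T i N ≤ 3 ^ (i - 1) * catalan N := by
  induction i, h1 using Nat.le_induction with
  | base =>
    simpa using base N (by omega)
  | succ i hi ih =>
    have ih' := ih (by omega)
    have hs := step N i hi (by omega)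
    rw [show i + 1 - 1 = i by omega]
    have e4 : (4 : ℕ) ^ i = 4 * 4 ^ (i - 1) := by
      conv_lhs => rw [show i = (i - 1) + 1 by omega]
      rw [pow_succ']
    have e3 : (3 : ℕ) ^ i = 3 * 3 ^ (i - 1) := by
      conv_lhs => rw [show i = (i - 1) + 1 by omega]
      rw [pow_succ']
    calc 3 * 4 ^ i * T (i + 1) N = (3 * 4 ^ (i - 1)) * (4 * T (i + 1) N) := by rw [e4]; ring
      _ ≤ (3 * 4 ^ (i - 1)) * (3 * T i N) := Nat.mul_le_mul_left _ hs
      _ = 3 * (3 * 4 ^ (i - 1) * T i N) := by ring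
      _ ≤ 3 * (3 ^ (i - 1) * catalan N) := Nat.mul_le_mul_left _ ih'
      _ = 3 ^ i * catalan N := by rw [e3]; ring

end PDAux

/-- For `1 ≤ i ≤ N-5`, we have `T_i(N)/C_N ≤ (1/3)·(3/4)^{i-1}`. -/
theorem T_ratio_bound (N i : ℕ) (h1 : 1 ≤ i) (h2 : i ≤ N - 5) :
    (T i N : ℝ) / (catalan N : ℝ) ≤ (1 / 3) * (3 / 4) ^ (i - 1) := by
  have hm := PDAux.main_nat N i h1 h2
  have hcat : 0 < catalan N := by
    have h := succ_mul_catalan_eq_centralBinom N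
    have hcb := Nat.centralBinom_pos N
    rcases Nat.eq_zero_or_pos (catalan N) with h0 | h0
    · rw [h0, Nat.mul_zero] at h
      omega
    · exact h0
  have hmR : (3 : ℝ) * 4 ^ (i - 1) * (T i N : ℝ) ≤ 3 ^ (i - 1) * (catalan N : ℝ) := by
    exact_mod_cast hm
  have hcatR : (0 : ℝ) < (catalan N : ℝ) := by exact_mod_cast hcat
  have h4 : ((4 : ℝ)) ^ (i - 1) ≠ 0 := by positivity
  have hrw : (1 : ℝ) / 3 * ((3 : ℝ) ^ (i - 1) / (4 : ℝ) ^ (i - 1)) * (catalan N : ℝ)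
      = ((3 : ℝ) ^ (i - 1) * (catalan N : ℝ)) / (3 * (4 : ℝ) ^ (i - 1)) := by
    field_simp
  rw [div_pow, div_le_iff₀ hcatR, hrw, le_div_iff₀ (by positivity)]
  nlinarith [hmR]
end

section
/- The number of 321-avoiding permutations of size N that are k-winnable equals the sum over i = 1 to N-k of binom((k-1)+(N-i), k-1) · ((N-k-i+2)/((N-i)+1)) · (N-k-i+1). -/
def IsLTRMax {N : ℕ} (p : Equiv.Perm (Fin N)) (j : Fin N) : Prop :=
  ∀ i : Fin N, i < j → p i < p j

def Winnable (N k : ℕ) (p : Equiv.Perm (Fin N)) : Prop :=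
  ∃ j : Fin N, k ≤ (j : ℕ) ∧ IsLTRMax p j ∧
    (∀ i : Fin N, k ≤ (i : ℕ) → IsLTRMax p i → j ≤ i) ∧ ((p j : ℕ) = N - 1)

def Avoids321 {N : ℕ} (p : Equiv.Perm (Fin N)) : Prop :=
  ¬ ∃ i j l : Fin N, i < j ∧ j < l ∧ p l < p j ∧ p j < p i

/-- The number of 321-avoiding permutations of size `N` that are `k`-winnable. -/
noncomputable def winCount (N k : ℕ) : ℕ :=
  Nat.card {p : Equiv.Perm (Fin N) // Avoids321 p ∧ Winnable N k p}

section Aux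
variable {N : ℕ}

def runMax (p : Equiv.Perm (Fin N)) (j : Fin N) : Fin N :=
  (Finset.Iic j).sup' ⟨j, Finset.mem_Iic.mpr le_rfl⟩ p

lemma le_runMax (p : Equiv.Perm (Fin N)) {i j : Fin N} (h : i ≤ j) : p i ≤ runMax p j :=
  Finset.le_sup' p (Finset.mem_Iic.mpr h)

lemma runMax_mono (p : Equiv.Perm (Fin N)) : Monotone (runMax p) := by
  intro i j hij
  exact Finset.sup'_le _ _ fun b hb => Finset.le_sup' p
    (Finset.mem_Iic.mpr ((Finset.mem_Iic.mp hb).trans hij))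

lemma exists_runMax (p : Equiv.Perm (Fin N)) (j : Fin N) :
    ∃ i, i ≤ j ∧ p i = runMax p j := by
  obtain ⟨i, hi, heq⟩ := Finset.exists_mem_eq_sup' ⟨j, Finset.mem_Iic.mpr le_rfl⟩ p
  exact ⟨i, Finset.mem_Iic.mp hi, heq.symm⟩

lemma coe_le_runMax (p : Equiv.Perm (Fin N)) (j : Fin N) : (j : ℕ) ≤ runMax p j := by
  have h : (Finset.Iic j).image p ⊆ Finset.Iic (runMax p j) := by
    intro x hx
    obtain ⟨i, hi, rfl⟩ := Finset.mem_image.mp hx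
    exact Finset.mem_Iic.mpr (le_runMax p (Finset.mem_Iic.mp hi))
  have hc := Finset.card_le_card h
  rw [Finset.card_image_of_injective _ p.injective] at hc
  simpa [Fin.card_Iic] using hc

lemma isLTRMax_iff (p : Equiv.Perm (Fin N)) (j : Fin N) :
    IsLTRMax p j ↔ runMax p j = p j := by
  constructor
  · intro h
    refine le_antisymm (Finset.sup'_le _ _ fun b hb => ?_) (le_runMax p le_rfl)
    rcases lt_or_eq_of_le (Finset.mem_Iic.mp hb) with hlt | rfl
    · exact (h b hlt).le
    · exact le_rfl
  · intro h i hij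
    have h1 : p i ≤ p j := h ▸ le_runMax p hij.le
    exact lt_of_le_of_ne h1 (fun he => absurd (p.injective he) hij.ne)

lemma mex_of_not_max {p : Equiv.Perm (Fin N)} (hp : Avoids321 p) {j : Fin N}
    (hj : ¬ IsLTRMax p j) {y : Fin N} (hy : y ∉ (Finset.Iio j).image p) : p j ≤ y := by
  by_contra hlt
  push_neg at hlt
  obtain ⟨l, rfl⟩ := p.surjective y
  have hlj : j < l := by
    rcases lt_trichotomy l j with h | rfl | h
    · exact absurd (Finset.mem_image_of_mem p (Finset.mem_Iio.mpr h)) hy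
    · exact absurd rfl hlt.ne
    · exact h
  simp only [IsLTRMax, not_forall] at hj
  obtain ⟨i, hij, hge⟩ := hj
  push_neg at hge
  have : p j < p i := lt_of_le_of_ne hge (fun he => absurd (p.injective he) hij.ne')
  exact hp ⟨i, j, l, hij, hlj, hlt, this⟩

end Aux

section Inj
variable {N : ℕ}

lemma runMax_inj {p p' : Equiv.Perm (Fin N)} (hp : Avoids321 p) (hp' : Avoids321 p')
    (h : runMax p = runMax p') : p = p' := by
  have key : ∀ n : ℕ, ∀ j : Fin N, (j : ℕ) = n → p j = p' j := by
    intro n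
    induction n using Nat.strong_induction_on with
    | _ n ih =>
      intro j hjn
      have hagree : (Finset.Iio j).image p = (Finset.Iio j).image p' := by
        apply Finset.image_congr
        intro i hi
        exact ih i (hjn ▸ (Finset.mem_Iio.mp (by simpa using hi))) i rfl
      by_cases h1 : IsLTRMax p j <;> by_cases h2 : IsLTRMax p' j
      · rw [isLTRMax_iff] at h1 h2
        rw [← h1, ← h2, h]
      · -- j max for p, not for p'
        exfalso
        simp only [IsLTRMax, not_forall] at h2
        obtain ⟨i0, hi0, hge⟩ := h2
        push_neg at hge
        obtain ⟨i, hi, heq⟩ := exists_runMax p' j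
        have hne : i ≠ j := by
          rintro rfl
          have : p' i0 ≤ p' i := heq ▸ le_runMax p' hi0.le
          have h3 : p' i < p' i0 := lt_of_le_of_ne hge (fun he => absurd (p'.injective he) hi0.ne')
          exact absurd this (not_le.mpr h3)
        have hij : i < j := lt_of_le_of_ne hi hne
        have hpi : p i = p' i := ih i (hjn ▸ hij) i rfl
        have hlt : p i < p j := (h1 i hij)
        have : runMax p j = p i := by rw [h, ← heq, hpi]
        exact absurd (le_runMax p (le_refl j)) (not_le.mpr (this ▸ hlt))
      · -- symmetric
        exfalso
        simp only [IsLTRMax, not_forall] at h1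
        obtain ⟨i0, hi0, hge⟩ := h1
        push_neg at hge
        obtain ⟨i, hi, heq⟩ := exists_runMax p j
        have hne : i ≠ j := by
          rintro rfl
          have : p i0 ≤ p i := heq ▸ le_runMax p hi0.le
          have h3 : p i < p i0 := lt_of_le_of_ne hge (fun he => absurd (p.injective he) hi0.ne')
          exact absurd this (not_le.mpr h3)
        have hij : i < j := lt_of_le_of_ne hi hne
        have hpi : p i = p' i := ih i (hjn ▸ hij) i rfl
        have hlt : p' i < p' j := (h2 i hij)
        have : runMax p' j = p' i := by rw [← h, ← heq, hpi]
        exact absurd (le_runMax p' (le_refl j)) (not_le.mpr (this ▸ hlt))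
      · -- neither max
        have e1 : p j ≤ p' j := by
          apply mex_of_not_max hp h1
          rw [hagree]
          intro hmem
          obtain ⟨i, hi, heq⟩ := Finset.mem_image.mp hmem
          exact absurd (p'.injective heq) (Finset.mem_Iio.mp hi).ne
        have e2 : p' j ≤ p j := by
          apply mex_of_not_max hp' h2
          rw [← hagree]
          intro hmem
          obtain ⟨i, hi, heq⟩ := Finset.mem_image.mp hmem
          exact absurd (p.injective heq) (Finset.mem_Iio.mp hi).ne
        exact le_antisymm e1 e2
  exact Equiv.ext fun j => key j j rfl

end Inj

section Rank
variable {α : Type*} [LinearOrder α]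

lemma orderIsoOfFin_le_iff (s : Finset α) {n : ℕ} (h : s.card = n) (i : Fin n) (x : α) :
    ((s.orderIsoOfFin h i : α) ≤ x) ↔ (i : ℕ) < (s.filter (· ≤ x)).card := by
  constructor
  · intro hle
    have hsub : (Finset.Iic i).image (fun j => (s.orderIsoOfFin h j : α)) ⊆
        s.filter (· ≤ x) := by
      intro y hy
      obtain ⟨j, hj, rfl⟩ := Finset.mem_image.mp hy
      refine Finset.mem_filter.mpr ⟨(s.orderIsoOfFin h j).2, ?_⟩
      exact le_trans (by exact_mod_cast (s.orderIsoOfFin h).monotone (Finset.mem_Iic.mp hj)) hle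
    have hcard := Finset.card_le_card hsub
    have hinj : Function.Injective (fun j : Fin n => (s.orderIsoOfFin h j : α)) := by
      intro a b hab
      exact (s.orderIsoOfFin h).injective (Subtype.ext hab)
    rw [Finset.card_image_of_injective _ hinj, Fin.card_Iic] at hcard
    omega
  · intro hlt
    by_contra hgt
    push_neg at hgt
    have hsub : s.filter (· ≤ x) ⊆
        (Finset.Iio i).image (fun j => (s.orderIsoOfFin h j : α)) := by
      intro y hy
      obtain ⟨hys, hyx⟩ := Finset.mem_filter.mp hy
      set j := (s.orderIsoOfFin h).symm ⟨y, hys⟩ with hj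
      have hyj : (s.orderIsoOfFin h j : α) = y := by
        rw [hj, OrderIso.apply_symm_apply]
      have hji : j < i := by
        have : (s.orderIsoOfFin h j : α) < (s.orderIsoOfFin h i : α) :=
          hyj ▸ lt_of_le_of_lt hyx hgt
        by_contra hge
        push_neg at hge
        exact absurd (by exact_mod_cast (s.orderIsoOfFin h).monotone hge) (not_le.mpr this)
      exact Finset.mem_image.mpr ⟨j, Finset.mem_Iio.mpr hji, hyj⟩
    have hcard := Finset.card_le_card hsub
    have hinj : Function.Injective (fun j : Fin n => (s.orderIsoOfFin h j : α)) := by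
      intro a b hab
      exact (s.orderIsoOfFin h).injective (Subtype.ext hab)
    rw [Finset.card_image_of_injective _ hinj, Fin.card_Iio] at hcard
    omega

end Rank

section Construct
variable {N : ℕ}

def jumpSet (q : Fin N → Fin N) : Finset (Fin N) :=
  Finset.univ.filter (fun j => ∀ i, i < j → q i < q j)

lemma attain {q : Fin N → Fin N} (h1 : Monotone q) (j : Fin N) :
    ∃ i, i ≤ j ∧ i ∈ jumpSet q ∧ q i = q j := by
  have key : ∀ n : ℕ, ∀ j : Fin N, (j : ℕ) = n → ∃ i, i ≤ j ∧ i ∈ jumpSet q ∧ q i = q j := by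
    intro n
    induction n using Nat.strong_induction_on with
    | _ n ih =>
      intro j hjn
      by_cases hj : j ∈ jumpSet q
      · exact ⟨j, le_rfl, hj, rfl⟩
      · simp only [jumpSet, Finset.mem_filter, Finset.mem_univ, true_and, not_forall] at hj
        obtain ⟨i', hi', hge⟩ := hj
        push_neg at hge
        have heq : q i' = q j := le_antisymm (h1 hi'.le) hge
        obtain ⟨i, hi1, hi2, hi3⟩ := ih i' (hjn ▸ hi') i' rfl
        exact ⟨i, hi1.trans hi'.le, hi2, hi3.trans heq⟩
  exact key j j rfl

lemma jump_strict {q : Fin N → Fin N} {i j : Fin N} (hj : j ∈ jumpSet q) (hij : i < j) :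
    q i < q j := by
  simp only [jumpSet, Finset.mem_filter] at hj
  exact hj.2 i hij

lemma jump_injOn (q : Fin N → Fin N) : Set.InjOn q (jumpSet q) := by
  intro a ha b hb hab
  rcases lt_trichotomy a b with h | h | h
  · exact absurd hab (jump_strict hb h).ne
  · exact h
  · exact absurd hab.symm (jump_strict ha h).ne

lemma image_jump {q : Fin N → Fin N} (h1 : Monotone q) :
    Finset.image q (jumpSet q) = Finset.image q Finset.univ := by
  apply Finset.Subset.antisymm (Finset.image_subset_image (Finset.subset_univ _))
  intro y hy
  obtain ⟨j, _, rfl⟩ := Finset.mem_image.mp hy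
  obtain ⟨i, _, hi2, hi3⟩ := attain h1 j
  exact Finset.mem_image.mpr ⟨i, hi2, hi3⟩

lemma card_jump {q : Fin N → Fin N} (h1 : Monotone q) :
    (jumpSet q).card = (Finset.image q Finset.univ).card := by
  rw [← image_jump h1, Finset.card_image_of_injOn (jump_injOn q)]

/-- The cardinality of jumps up to `j` equals the values in the image up to `q j`. -/
lemma card_jump_le {q : Fin N → Fin N} (h1 : Monotone q) (j : Fin N) :
    ((jumpSet q).filter (· ≤ j)).card
      = ((Finset.image q Finset.univ).filter (· ≤ q j)).card := by
  apply Finset.card_bij (fun i _ => q i)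
  · intro a ha
    simp only [Finset.mem_filter] at ha ⊢
    exact ⟨Finset.mem_image_of_mem q (Finset.mem_univ _), h1 ha.2⟩
  · intro a ha b hb hab
    simp only [Finset.mem_filter] at ha hb
    exact jump_injOn q ha.1 hb.1 hab
  · intro b hb
    simp only [Finset.mem_filter] at hb
    obtain ⟨hb1, hb2⟩ := hb
    obtain ⟨i0, _, rfl⟩ := Finset.mem_image.mp hb1
    obtain ⟨i, hi1, hi2, hi3⟩ := attain h1 i0
    refine ⟨i, Finset.mem_filter.mpr ⟨hi2, ?_⟩, hi3⟩
    by_contra hgt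
    push_neg at hgt
    have := jump_strict hi2 hgt
    rw [hi3] at this
    exact absurd (this.trans_le hb2) (lt_irrefl _)

end Construct

section Main
variable {N K : ℕ}

theorem exists_perm (hK : K < N) (q : Fin N → Fin N) (h1 : Monotone q)
    (h2 : ∀ j : Fin N, (j : ℕ) ≤ q j)
    (h3 : (q ⟨K, hK⟩ : ℕ) < N - 1)
    (h4 : ∀ j : Fin N, K ≤ (j : ℕ) → (q j : ℕ) = q ⟨K, hK⟩ ∨ (q j : ℕ) = N - 1) :
    ∃ p : Equiv.Perm (Fin N), Avoids321 p ∧ Winnable N (K + 1) p ∧ runMax p = q := by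
  classical
  set A := jumpSet q with hA
  set B := Finset.image q Finset.univ with hB
  set S := Finset.univ \ A with hS
  set T := Finset.univ \ B with hT
  have hScard : T.card = S.card := by
    rw [hS, hT, Finset.card_sdiff_of_subset (Finset.subset_univ _),
      Finset.card_sdiff_of_subset (Finset.subset_univ _), card_jump h1]
  set e1 := S.orderIsoOfFin rfl with he1
  set e2 := T.orderIsoOfFin hScard with he2
  have hmemS : ∀ {j : Fin N}, j ∉ A → j ∈ S := fun hj =>
    Finset.mem_sdiff.mpr ⟨Finset.mem_univ _, hj⟩
  set p0 : Fin N → Fin N :=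
    fun j => if hj : j ∈ A then q j else (e2 (e1.symm ⟨j, hmemS hj⟩) : Fin N) with hp0
  have pA : ∀ j ∈ A, p0 j = q j := fun j hj => dif_pos hj
  have pS : ∀ (j : Fin N) (hj : j ∉ A), p0 j = (e2 (e1.symm ⟨j, hmemS hj⟩) : Fin N) :=
    fun j hj => dif_neg hj
  have pT : ∀ (j : Fin N), j ∉ A → p0 j ∈ T := by
    intro j hj
    rw [pS j hj]
    exact (e2 (e1.symm ⟨j, hmemS hj⟩)).2
  have plt : ∀ (j : Fin N), j ∉ A → p0 j < q j := by
    intro j hj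
    set i := e1.symm ⟨j, hmemS hj⟩ with hi
    have hij : (e1 i : Fin N) = j := by rw [hi, OrderIso.apply_symm_apply]
    have r1 : (i : ℕ) < (S.filter (· ≤ j)).card := by
      rw [← orderIsoOfFin_le_iff S rfl i j, ← he1, hij]
    have hSf : S.filter (· ≤ j) = Finset.Iic j \ A := by
      ext x
      simp only [hS, Finset.mem_filter, Finset.mem_sdiff, Finset.mem_univ, true_and,
        Finset.mem_Iic]
      tauto
    have hTf : T.filter (· ≤ q j) = Finset.Iic (q j) \ B := by
      ext x
      simp only [hT, Finset.mem_filter, Finset.mem_sdiff, Finset.mem_univ, true_and,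
        Finset.mem_Iic]
      tauto
    have hAf : A.filter (· ≤ j) = Finset.Iic j ∩ A := by
      ext x
      simp only [Finset.mem_filter, Finset.mem_inter, Finset.mem_Iic]
      tauto
    have hBf : B.filter (· ≤ q j) = Finset.Iic (q j) ∩ B := by
      ext x
      simp only [Finset.mem_filter, Finset.mem_inter, Finset.mem_Iic]
      tauto
    have hcardA := Finset.card_inter_add_card_sdiff (Finset.Iic j) A
    have hcardB := Finset.card_inter_add_card_sdiff (Finset.Iic (q j)) B
    have hjump := card_jump_le h1 j
    rw [hAf, hBf] at hjump
    have hIic1 : (Finset.Iic j).card = (j : ℕ) + 1 := by rw [Fin.card_Iic]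
    have hIic2 : (Finset.Iic (q j)).card = (q j : ℕ) + 1 := by rw [Fin.card_Iic]
    have r2 : (S.filter (· ≤ j)).card ≤ (T.filter (· ≤ q j)).card := by
      rw [hSf, hTf]
      have := h2 j
      omega
    have hle : (e2 i : Fin N) ≤ q j :=
      (orderIsoOfFin_le_iff T hScard i (q j)).mpr (by omega)
    rw [pS j hj, ← hi]
    refine lt_of_le_of_ne hle ?_
    intro heq
    have h5 : (e2 i : Fin N) ∈ T := (e2 i).2
    rw [heq] at h5
    rw [hT, Finset.mem_sdiff] at h5
    exact h5.2 (Finset.mem_image_of_mem q (Finset.mem_univ j))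
  have ple : ∀ j : Fin N, p0 j ≤ q j := by
    intro j
    by_cases hj : j ∈ A
    · rw [pA j hj]
    · exact (plt j hj).le
  have pinj : Function.Injective p0 := by
    intro a b hab
    by_cases ha : a ∈ A <;> by_cases hb : b ∈ A
    · exact jump_injOn q ha hb (by rwa [pA a ha, pA b hb] at hab)
    · exfalso
      have h5 := pT b hb
      rw [← hab, pA a ha, hT, Finset.mem_sdiff] at h5
      exact h5.2 (Finset.mem_image_of_mem q (Finset.mem_univ a))
    · exfalso
      have h5 := pT a ha
      rw [hab, pA b hb, hT, Finset.mem_sdiff] at h5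
      exact h5.2 (Finset.mem_image_of_mem q (Finset.mem_univ b))
    · rw [pS a ha, pS b hb] at hab
      have h5 := e1.symm.injective (e2.injective (Subtype.ext hab))
      have := congrArg (Subtype.val) h5
      simpa using this
  set p : Equiv.Perm (Fin N) :=
    Equiv.ofBijective p0 (Finite.injective_iff_bijective.mp pinj) with hpdef
  have hpeq : ∀ j, p j = p0 j := fun j => rfl
  have hrm : runMax p = q := by
    funext j
    apply le_antisymm
    · apply Finset.sup'_le
      intro b hb
      rw [hpeq]
      exact (ple b).trans (h1 (Finset.mem_Iic.mp hb))
    · obtain ⟨i, hi1, hi2, hi3⟩ := attain h1 j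
      calc q j = p0 i := by rw [pA i hi2, hi3]
        _ = p i := (hpeq i).symm
        _ ≤ runMax p j := le_runMax p hi1
  have hmono_lt : ∀ (i j : Fin N), i < j → j ∈ A → p0 i < p0 j := by
    intro i j hij hj
    calc p0 i ≤ q i := ple i
      _ < q j := jump_strict hj hij
      _ = p0 j := (pA j hj).symm
  have havoid : Avoids321 p := by
    rintro ⟨i, j, l, hij, hjl, h5, h6⟩
    rw [hpeq, hpeq] at h5 h6
    have hjA : j ∉ A := fun hj => absurd (hmono_lt i j hij hj) (not_lt.mpr h6.le)
    have hlA : l ∉ A := fun hl => absurd (hmono_lt j l hjl hl) (not_lt.mpr h5.le)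
    have : p0 j < p0 l := by
      rw [pS j hjA, pS l hlA]
      have h7 : (⟨j, hmemS hjA⟩ : {x // x ∈ S}) < ⟨l, hmemS hlA⟩ := by
        rw [Subtype.mk_lt_mk]; exact hjl
      exact_mod_cast e2.strictMono (e1.symm.strictMono h7)
    exact absurd this (not_lt.mpr h5.le)
  have hwin : Winnable N (K + 1) p := by
    have hN1 : N - 1 < N := by omega
    set Ltop : Fin N := ⟨N - 1, hN1⟩ with hLtop
    have hle_top : ∀ i : Fin N, i ≤ Ltop := by
      intro i
      have := i.isLt
      rw [hLtop, Fin.le_def]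
      simp
      omega
    have hFne : (Finset.univ.filter (fun j => q j = Ltop)).Nonempty := by
      refine ⟨⟨N - 1, hN1⟩, ?_⟩
      rw [Finset.mem_filter]
      refine ⟨Finset.mem_univ _, le_antisymm (hle_top _) ?_⟩
      rw [Fin.le_def]
      exact h2 _
    set j₀ := (Finset.univ.filter (fun j => q j = Ltop)).min' hFne with hj₀
    have hj₀L : q j₀ = Ltop := by
      have := Finset.min'_mem _ hFne
      simp only [Finset.mem_filter] at this
      exact this.2
    have hmin : ∀ i, q i = Ltop → j₀ ≤ i := by
      intro i hi
      exact (Finset.univ.filter (fun j => q j = Ltop)).min'_le i (Finset.mem_filter.mpr ⟨Finset.mem_univ _, hi⟩)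
    have hlt₀ : ∀ i, i < j₀ → q i < Ltop := by
      intro i hi
      refine lt_of_le_of_ne (hle_top _) fun he => ?_
      exact absurd hi (not_lt.mpr (hmin i he))
    have hj₀A : j₀ ∈ A := by
      rw [hA, jumpSet, Finset.mem_filter]
      exact ⟨Finset.mem_univ _, fun i hi => hj₀L ▸ hlt₀ i hi⟩
    have hpj₀ : p j₀ = Ltop := by rw [hpeq, pA _ hj₀A, hj₀L]
    have hK₀ : K + 1 ≤ (j₀ : ℕ) := by
      by_contra hc
      push_neg at hc
      have : j₀ ≤ ⟨K, hK⟩ := by rw [Fin.le_def]; simpa using by omega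
      have h5 : q j₀ ≤ q ⟨K, hK⟩ := h1 this
      rw [hj₀L, hLtop, Fin.le_def] at h5
      simp at h5
      omega
    refine ⟨j₀, hK₀, ?_, ?_, by rw [hpj₀]⟩
    · intro i hi
      rw [hpeq i, hpj₀]
      exact lt_of_le_of_lt (ple i) (hlt₀ i hi)
    · intro i hiK himax
      by_contra hc
      push_neg at hc
      have hqi : q i = p i := by
        rw [← hrm, (isLTRMax_iff p i).mp himax]
      have hqiK : (q i : ℕ) = (q ⟨K, hK⟩ : ℕ) := by
        rcases h4 i (by omega) with h | h
        · exact h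
        · exfalso
          have := hlt₀ i hc
          rw [hLtop, Fin.lt_def] at this
          simp at this
          omega
      obtain ⟨i'', hi''1, hi''2, hi''3⟩ := attain h1 ⟨K, hK⟩
      have : p i'' = p i := by
        rw [hpeq i'', pA _ hi''2]
        apply Fin.ext
        rw [← hqi]
        rw [Fin.ext_iff] at hi''3
        omega
      have heq := p.injective this
      rw [Fin.le_def] at hi''1
      simp at hi''1
      rw [heq] at hi''1
      omega
  exact ⟨p, havoid, hwin, hrm⟩

end Main

section Forward
variable {N K : ℕ}

theorem runMax_cond (hK : K < N) (p : Equiv.Perm (Fin N)) (hw : Winnable N (K + 1) p) :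
    (runMax p ⟨K, hK⟩ : ℕ) < N - 1 ∧
      ∀ j : Fin N, K ≤ (j : ℕ) →
        (runMax p j : ℕ) = (runMax p ⟨K, hK⟩ : ℕ) ∨ (runMax p j : ℕ) = N - 1 := by
  obtain ⟨j₀, hj₀K, hj₀max, hj₀min, hj₀val⟩ := hw
  have hvlt : ∀ x : Fin N, (x : ℕ) ≤ N - 1 := fun x => by have := x.isLt; omega
  have c1 : (runMax p ⟨K, hK⟩ : ℕ) < N - 1 := by
    rcases lt_or_eq_of_le (hvlt (runMax p ⟨K, hK⟩)) with h | h
    · exact h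
    · exfalso
      obtain ⟨i, hi1, hi2⟩ := exists_runMax p ⟨K, hK⟩
      have : p i = p j₀ := by
        apply Fin.ext
        rw [hi2, h, hj₀val]
      have heq := p.injective this
      rw [Fin.le_def] at hi1
      simp only at hi1
      rw [heq] at hi1
      omega
  refine ⟨c1, fun j hj => ?_⟩
  rcases lt_or_ge (j : ℕ) (j₀ : ℕ) with hcase | hcase
  · left
    have hKj : (⟨K, hK⟩ : Fin N) ≤ j := by rw [Fin.le_def]; exact hj
    refine congrArg _ (le_antisymm ?_ (runMax_mono p hKj))
    by_contra hgt
    push_neg at hgt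
    obtain ⟨i, hi1, hi2⟩ := exists_runMax p j
    have himax : IsLTRMax p i := by
      rw [isLTRMax_iff]
      refine le_antisymm ?_ (le_runMax p le_rfl)
      rw [hi2]
      exact runMax_mono p hi1
    have hiK : K + 1 ≤ (i : ℕ) := by
      by_contra hc
      push_neg at hc
      have : i ≤ (⟨K, hK⟩ : Fin N) := by rw [Fin.le_def]; simp; omega
      have h5 : p i ≤ runMax p ⟨K, hK⟩ := le_runMax p this
      rw [hi2] at h5
      exact absurd h5 (not_le.mpr hgt)
    have := hj₀min i hiK himax
    rw [Fin.le_def] at this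
    rw [Fin.lt_def] at *
    have h6 : (i : ℕ) ≤ (j : ℕ) := hi1
    omega
  · right
    have h5 : p j₀ ≤ runMax p j := le_runMax p (by rw [Fin.le_def]; exact hcase)
    rw [Fin.le_def, hj₀val] at h5
    have := hvlt (runMax p j)
    omega

end Forward

section Count
variable (N K : ℕ)

def QType (hK : K < N) : Type :=
  {q : Fin N → Fin N // Monotone q ∧ (∀ j : Fin N, (j : ℕ) ≤ q j) ∧
    (q ⟨K, hK⟩ : ℕ) < N - 1 ∧
    ∀ j : Fin N, K ≤ (j : ℕ) → ((q j : ℕ) = q ⟨K, hK⟩ ∨ (q j : ℕ) = N - 1)}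

def GT (c v : ℕ) : Type :=
  {f : Fin (c + 1) → Fin N // Monotone f ∧ (∀ i : Fin (c + 1), (i : ℕ) ≤ (f i : ℕ)) ∧
    ((f (Fin.last c) : ℕ) = v)}

instance (hK : K < N) : Finite (QType N K hK) := by unfold QType; infer_instance
instance (c v : ℕ) : Finite (GT N c v) := by unfold GT; infer_instance

noncomputable def G (c v : ℕ) : ℕ := Nat.card (GT N c v)

theorem card_perm_eq (hK : K < N) :
    Nat.card {p : Equiv.Perm (Fin N) // Avoids321 p ∧ Winnable N (K + 1) p} =
      Nat.card (QType N K hK) := by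
  apply Nat.card_congr
  have hbij : Function.Bijective
      (fun (p : {p : Equiv.Perm (Fin N) // Avoids321 p ∧ Winnable N (K + 1) p}) =>
        (⟨runMax p.1, runMax_mono p.1, coe_le_runMax p.1,
          (runMax_cond hK p.1 p.2.2).1, (runMax_cond hK p.1 p.2.2).2⟩ : QType N K hK)) := by
    constructor
    · rintro ⟨p, hp⟩ ⟨p', hp'⟩ h
      have := congrArg Subtype.val h
      simp only at this
      exact Subtype.ext (runMax_inj hp.1 hp'.1 this)
    · rintro ⟨q, hq1, hq2, hq3, hq4⟩
      obtain ⟨p, ha, hw, hr⟩ := exists_perm hK q hq1 hq2 hq3 (fun j hj => hq4 j hj)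
      exact ⟨⟨p, ha, hw⟩, Subtype.ext hr⟩
  exact Equiv.ofBijective _ hbij

end Count

section SigmaEquiv
variable {N K : ℕ}

def MT (K v : ℕ) : Type := {m : ℕ // K + 1 ≤ m ∧ m ≤ v + 1}

instance (K v : ℕ) : Finite (MT K v) :=
  Finite.of_injective (fun m => (⟨m.1, by have := m.2; omega⟩ : Fin (v + 2)))
    (by rintro ⟨a, ha⟩ ⟨b, hb⟩ h; exact Subtype.ext (by simpa [Fin.ext_iff] using h))

lemma card_MT (K v : ℕ) : Nat.card (MT K v) = v + 1 - K := by
  have e : MT K v ≃ {m // m ∈ Finset.Icc (K + 1) (v + 1)} :=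
    Equiv.subtypeEquivRight (by intro m; simp [Finset.mem_Icc, MT])
  rw [Nat.card_congr e, Nat.card_eq_fintype_card, Fintype.card_coe, Nat.card_Icc]
  omega

lemma nat_card_sigma {ι : Type*} [Fintype ι] (β : ι → Type*) [∀ i, Finite (β i)] :
    Nat.card (Σ i, β i) = ∑ i, Nat.card (β i) := by
  letI : ∀ i, Fintype (β i) := fun i => Fintype.ofFinite _
  simp [Nat.card_eq_fintype_card]

def recon (hK1 : K + 1 < N) (x : Σ v : Fin (N - 1), GT N K (v : ℕ) × MT K (v : ℕ)) :
    Fin N → Fin N :=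
  fun j => if h : (j : ℕ) < K + 1 then x.2.1.1 ⟨j, h⟩
    else if (j : ℕ) < x.2.2.1 then ⟨(x.1 : ℕ), by have := x.1.isLt; omega⟩
    else ⟨N - 1, by omega⟩

lemma recon_apply_lt (hK1 : K + 1 < N) (x) (j : Fin N) (h : (j : ℕ) < K + 1) :
    recon hK1 x j = x.2.1.1 ⟨j, h⟩ := dif_pos h

lemma recon_apply_mid (hK1 : K + 1 < N) (x) (j : Fin N) (h : ¬ (j : ℕ) < K + 1)
    (h2 : (j : ℕ) < x.2.2.1) :
    recon hK1 x j = ⟨(x.1 : ℕ), by have := x.1.isLt; omega⟩ := by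
  rw [recon, dif_neg h, if_pos h2]

lemma recon_apply_top (hK1 : K + 1 < N) (x) (j : Fin N) (h : ¬ (j : ℕ) < K + 1)
    (h2 : ¬ (j : ℕ) < x.2.2.1) :
    recon hK1 x j = ⟨N - 1, by omega⟩ := by
  rw [recon, dif_neg h, if_neg h2]

lemma recon_val (hK1 : K + 1 < N) (x) (j : Fin N) :
    ((recon hK1 x j : Fin N) : ℕ) =
      if h : (j : ℕ) < K + 1 then (x.2.1.1 ⟨j, h⟩ : ℕ)
      else if (j : ℕ) < x.2.2.1 then (x.1 : ℕ) else N - 1 := by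
  by_cases h : (j : ℕ) < K + 1
  · rw [recon_apply_lt hK1 x j h, dif_pos h]
  · by_cases h2 : (j : ℕ) < x.2.2.1
    · rw [recon_apply_mid hK1 x j h h2, dif_neg h, if_pos h2]
    · rw [recon_apply_top hK1 x j h h2, dif_neg h, if_neg h2]

lemma recon_K (hK1 : K + 1 < N) (x) (hK : K < N) :
    ((recon hK1 x ⟨K, hK⟩ : Fin N) : ℕ) = (x.1 : ℕ) := by
  rw [recon_val, dif_pos (by simp)]
  have h5 : (⟨((⟨K, hK⟩ : Fin N) : ℕ), by simp⟩ : Fin (K + 1)) = Fin.last K := by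
    apply Fin.ext; simp
  rw [h5, x.2.1.2.2.2]

lemma recon_mem (hK1 : K + 1 < N) (hK : K < N)
    (x : Σ v : Fin (N - 1), GT N K (v : ℕ) × MT K (v : ℕ)) :
    Monotone (recon hK1 x) ∧ (∀ j : Fin N, (j : ℕ) ≤ recon hK1 x j) ∧
      ((recon hK1 x ⟨K, hK⟩ : ℕ) < N - 1) ∧
      ∀ j : Fin N, K ≤ (j : ℕ) →
        ((recon hK1 x j : ℕ) = (recon hK1 x ⟨K, hK⟩ : ℕ) ∨ (recon hK1 x j : ℕ) = N - 1) := by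
  obtain ⟨v, ⟨f, hf1, hf2, hf3⟩, ⟨m, hm1, hm2⟩⟩ := x
  have hvlt := v.isLt
  have hKv := recon_K hK1 ⟨v, ⟨f, hf1, hf2, hf3⟩, ⟨m, hm1, hm2⟩⟩ hK
  simp only at hKv
  have hfv : ∀ (j : ℕ) (h : j < K + 1), (f ⟨j, h⟩ : ℕ) ≤ (v : ℕ) := by
    intro j h
    have h6 := hf1 (Fin.le_last ⟨j, h⟩)
    rw [Fin.le_def] at h6
    omega
  refine ⟨?_, ?_, ?_, ?_⟩
  · intro a b hab
    rw [Fin.le_def] at hab ⊢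
    rw [recon_val, recon_val]
    dsimp only
    by_cases ha : (a : ℕ) < K + 1 <;> by_cases hb : (b : ℕ) < K + 1
    · rw [dif_pos ha, dif_pos hb]
      have h6 : (⟨(a : ℕ), ha⟩ : Fin (K + 1)) ≤ ⟨(b : ℕ), hb⟩ := by
        rw [Fin.le_def]; exact hab
      have := hf1 h6
      rw [Fin.le_def] at this
      exact this
    · rw [dif_pos ha, dif_neg hb]
      have := hfv a ha
      split <;> omega
    · omega
    · rw [dif_neg ha, dif_neg hb]
      split <;> split <;> omega
  · intro j
    rw [recon_val]
    dsimp only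
    by_cases h : (j : ℕ) < K + 1
    · rw [dif_pos h]
      exact hf2 ⟨j, h⟩
    · rw [dif_neg h]
      have := j.isLt
      split <;> omega
  · rw [hKv]; omega
  · intro j hj
    rw [hKv, recon_val]
    dsimp only
    by_cases h : (j : ℕ) < K + 1
    · rw [dif_pos h]
      left
      have h5 : (⟨(j : ℕ), h⟩ : Fin (K + 1)) = Fin.last K := by
        apply Fin.ext; simp; omega
      rw [h5, hf3]
    · rw [dif_neg h]
      split
      · left; rfl
      · right; rfl

theorem card_QType (hK1 : K + 1 < N) (hK : K < N) :
    Nat.card (QType N K hK) = ∑ v : Fin (N - 1), G N K (v : ℕ) * ((v : ℕ) + 1 - K) := by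
  classical
  have key : Nat.card (QType N K hK) =
      Nat.card (Σ v : Fin (N - 1), GT N K (v : ℕ) × MT K (v : ℕ)) := by
    apply Nat.card_congr
    refine (Equiv.ofBijective (fun x => (⟨recon hK1 x, recon_mem hK1 hK x⟩ : QType N K hK)) ?_).symm
    constructor
    · rintro ⟨vx, ⟨fx, hfx1, hfx2, hfx3⟩, ⟨mx, hmx1, hmx2⟩⟩
        ⟨vy, ⟨fy, hfy1, hfy2, hfy3⟩, ⟨my, hmy1, hmy2⟩⟩ heq
      rw [Subtype.mk.injEq] at heq
      set x := (⟨vx, ⟨fx, hfx1, hfx2, hfx3⟩, ⟨mx, hmx1, hmx2⟩⟩ :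
        Σ v : Fin (N - 1), GT N K (v : ℕ) × MT K (v : ℕ)) with hxd
      set y := (⟨vy, ⟨fy, hfy1, hfy2, hfy3⟩, ⟨my, hmy1, hmy2⟩⟩ :
        Σ v : Fin (N - 1), GT N K (v : ℕ) × MT K (v : ℕ)) with hyd
      have hv : vx = vy := by
        apply Fin.ext
        rw [← recon_K hK1 x hK, ← recon_K hK1 y hK, heq]
      have hvx := vx.isLt
      have hm : mx = my := by
        by_contra hne
        rcases Nat.lt_or_ge mx my with hlt | hge
        · have hmxN : mx < N := by omega
          have e1 : ((recon hK1 x ⟨mx, hmxN⟩ : Fin N) : ℕ) = N - 1 := by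
            rw [recon_apply_top hK1 x ⟨mx, hmxN⟩ (by simp; omega) (lt_irrefl mx)]
          have e2 : ((recon hK1 y ⟨mx, hmxN⟩ : Fin N) : ℕ) = (vy : ℕ) := by
            rw [recon_apply_mid hK1 y ⟨mx, hmxN⟩ (by simp; omega) (by simpa using hlt)]
          rw [heq] at e1
          rw [e2] at e1
          have := vy.isLt
          omega
        · have hlt : my < mx := by omega
          have hmyN : my < N := by have := vy.isLt; omega
          have e1 : ((recon hK1 y ⟨my, hmyN⟩ : Fin N) : ℕ) = N - 1 := by
            rw [recon_apply_top hK1 y ⟨my, hmyN⟩ (by simp; omega) (lt_irrefl my)]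
          have e2 : ((recon hK1 x ⟨my, hmyN⟩ : Fin N) : ℕ) = (vx : ℕ) := by
            rw [recon_apply_mid hK1 x ⟨my, hmyN⟩ (by simp; omega) (by simpa using hlt)]
          rw [heq] at e2
          rw [e1] at e2
          omega
      have hf : ∀ i : Fin (K + 1), fx i = fy i := by
        intro i
        have hiN : (i : ℕ) < N := by omega
        have e1 : ((recon hK1 x ⟨(i : ℕ), hiN⟩ : Fin N)) = fx ⟨(i : ℕ), i.isLt⟩ :=
          recon_apply_lt hK1 x ⟨(i : ℕ), hiN⟩ (by simpa using i.isLt)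
        have e2 : ((recon hK1 y ⟨(i : ℕ), hiN⟩ : Fin N)) = fy ⟨(i : ℕ), i.isLt⟩ :=
          recon_apply_lt hK1 y ⟨(i : ℕ), hiN⟩ (by simpa using i.isLt)
        have h7 : (⟨(i : ℕ), i.isLt⟩ : Fin (K + 1)) = i := by apply Fin.ext; rfl
        rw [h7] at e1 e2
        rw [← e1, ← e2, heq]
      subst hv hm
      have hfx : fx = fy := funext hf
      subst hfx
      rfl
    · rintro ⟨q, h1, h2, h3, h4⟩
      have hN1 : N - 1 < N := by omega
      have hFne : (Finset.univ.filter (fun j : Fin N => (q j : ℕ) = N - 1)).Nonempty := by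
        refine ⟨⟨N - 1, hN1⟩, Finset.mem_filter.mpr ⟨Finset.mem_univ _, ?_⟩⟩
        have h5 := h2 ⟨N - 1, hN1⟩
        have := (q ⟨N - 1, hN1⟩).isLt
        simp at h5 ⊢
        omega
      set j₀ := (Finset.univ.filter (fun j : Fin N => (q j : ℕ) = N - 1)).min' hFne with hj₀d
      set m := (j₀ : ℕ) with hmd
      have P1 : (q j₀ : ℕ) = N - 1 := by
        have := Finset.min'_mem _ hFne
        simp only [Finset.mem_filter] at this
        exact this.2
      have P2 : ∀ j : Fin N, (j : ℕ) < m → (q j : ℕ) ≠ N - 1 := by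
        intro j hj he
        have h5 := (Finset.univ.filter (fun j : Fin N => (q j : ℕ) = N - 1)).min'_le j
          (Finset.mem_filter.mpr ⟨Finset.mem_univ _, he⟩)
        rw [Fin.le_def] at h5
        omega
      have P3 : K + 1 ≤ m := by
        by_contra hc
        push_neg at hc
        have h5 : j₀ ≤ ⟨K, hK⟩ := by rw [Fin.le_def]; simp; omega
        have h6 := h1 h5
        rw [Fin.le_def] at h6
        omega
      have hmN : m < N := j₀.isLt
      have P6 : ∀ j : Fin N, K ≤ (j : ℕ) → (j : ℕ) < m → (q j : ℕ) = (q ⟨K, hK⟩ : ℕ) := by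
        intro j hjK hjm
        rcases h4 j hjK with h | h
        · exact h
        · exact absurd h (P2 j hjm)
      have P4 : m ≤ (q ⟨K, hK⟩ : ℕ) + 1 := by
        have hj' : m - 1 < N := by omega
        have h5 := P6 ⟨m - 1, hj'⟩ (by simp; omega) (by simp; omega)
        have h6 := h2 ⟨m - 1, hj'⟩
        simp at h5 h6
        omega
      have P5 : ∀ j : Fin N, m ≤ (j : ℕ) → (q j : ℕ) = N - 1 := by
        intro j hj
        have h5 : j₀ ≤ j := by rw [Fin.le_def]; exact hj
        have h6 := h1 h5
        rw [Fin.le_def] at h6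
        have := (q j).isLt
        omega
      have hKle : K + 1 ≤ N := by omega
      refine ⟨⟨⟨(q ⟨K, hK⟩ : ℕ), by omega⟩,
        ⟨fun i => q (Fin.castLE hKle i), ?_, ?_, ?_⟩, ⟨m, P3, by simpa using P4⟩⟩, ?_⟩
      · intro a b hab
        exact h1 (by rw [Fin.le_def]; simpa using hab)
      · intro i
        have := h2 (Fin.castLE hKle i)
        simpa using this
      · have h5 : Fin.castLE hKle (Fin.last K) = ⟨K, hK⟩ := by apply Fin.ext; simp
        simp only [h5]
      · apply Subtype.ext
        funext j
        apply Fin.ext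
        rw [recon_val]
        dsimp only
        by_cases h : (j : ℕ) < K + 1
        · rw [dif_pos h]
          have h5 : Fin.castLE hKle ⟨(j : ℕ), h⟩ = j := by apply Fin.ext; simp
          simp only [h5]
        · rw [dif_neg h]
          split
          · exact (P6 j (by omega) (by assumption)).symm
          · exact (P5 j (by omega)).symm
  rw [key, nat_card_sigma]
  congr 1
  funext v
  rw [Nat.card_prod, card_MT]
  rfl

end SigmaEquiv

section GCount
variable {N : ℕ}

lemma G_zero (c v : ℕ) (h : v < c) : G N c v = 0 := by
  rw [G, Nat.card_eq_zero]
  left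
  constructor
  rintro ⟨f, hf1, hf2, hf3⟩
  have h5 := hf2 (Fin.last c)
  rw [hf3] at h5
  simp [Fin.last] at h5
  omega

lemma G_base (v : ℕ) (h : v < N) : G N 0 v = 1 := by
  rw [G, Nat.card_eq_one_iff_unique]
  constructor
  · constructor
    rintro ⟨f, hf1, hf2, hf3⟩ ⟨g, hg1, hg2, hg3⟩
    apply Subtype.ext
    funext i
    have h0 : (i : ℕ) = 0 := by have := i.isLt; omega
    have hi : i = Fin.last 0 := by apply Fin.ext; rw [h0]; rfl
    subst hi
    apply Fin.ext
    rw [hf3, hg3]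
  · exact ⟨⟨fun _ => ⟨v, h⟩, monotone_const, fun i => by
      have : (i : ℕ) = 0 := by omega
      simp [this], by simp⟩⟩

lemma G_rec (c v : ℕ) (hv : c + 1 ≤ v) (hvN : v < N) :
    G N (c + 1) v = ∑ u : Fin (v + 1), G N c (u : ℕ) := by
  simp only [G]
  rw [← nat_card_sigma (fun u : Fin (v + 1) => GT N c (u : ℕ))]
  apply Nat.card_congr
  apply Equiv.symm
  set F : (Σ u : Fin (v + 1), GT N c (u : ℕ)) → (Fin (c + 2) → Fin N) :=
    fun x i => if h : (i : ℕ) < c + 1 then x.2.1 ⟨i, h⟩ else ⟨v, hvN⟩ with hF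
  have hFval : ∀ x (i : Fin (c + 2)),
      ((F x i : Fin N) : ℕ) = if h : (i : ℕ) < c + 1 then (x.2.1 ⟨i, h⟩ : ℕ) else v := by
    intro x i
    by_cases h : (i : ℕ) < c + 1
    · rw [hF]; simp only [dif_pos h]
    · rw [hF]; simp only [dif_neg h]
  have hx2v : ∀ (x : Σ u : Fin (v + 1), GT N c (u : ℕ)) (j : ℕ) (h : j < c + 1),
      (x.2.1 ⟨j, h⟩ : ℕ) ≤ (x.1 : ℕ) := by
    intro x j h
    have h6 := x.2.2.1 (Fin.le_last (⟨j, h⟩ : Fin (c + 1)))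
    rw [Fin.le_def, x.2.2.2.2] at h6
    exact h6
  have hmem : ∀ x, Monotone (F x) ∧ (∀ i : Fin (c + 2), (i : ℕ) ≤ F x i) ∧
      ((F x (Fin.last (c + 1)) : ℕ) = v) := by
    intro x
    have hu := x.1.isLt
    refine ⟨?_, ?_, ?_⟩
    · intro a b hab
      rw [Fin.le_def] at hab ⊢
      rw [hFval, hFval]
      by_cases ha : (a : ℕ) < c + 1 <;> by_cases hb : (b : ℕ) < c + 1
      · rw [dif_pos ha, dif_pos hb]
        have h7 : (⟨(a : ℕ), ha⟩ : Fin (c + 1)) ≤ ⟨(b : ℕ), hb⟩ := by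
          rw [Fin.le_def]; exact hab
        have := x.2.2.1 h7
        rw [Fin.le_def] at this
        exact this
      · rw [dif_pos ha, dif_neg hb]
        have := hx2v x a ha
        omega
      · omega
      · rw [dif_neg ha, dif_neg hb]
    · intro i
      rw [hFval]
      by_cases h : (i : ℕ) < c + 1
      · rw [dif_pos h]
        have := x.2.2.2.1 ⟨(i : ℕ), h⟩
        exact this
      · rw [dif_neg h]
        have := i.isLt
        omega
    · rw [hFval, dif_neg (by simp)]
  refine Equiv.ofBijective (fun x => ⟨F x, hmem x⟩) ⟨?_, ?_⟩
  · rintro ⟨ux, ⟨fx, hfx1, hfx2, hfx3⟩⟩ ⟨uy, ⟨fy, hfy1, hfy2, hfy3⟩⟩ heq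
    replace heq : F _ = F _ := congrArg Subtype.val heq
    set x := (⟨ux, ⟨fx, hfx1, hfx2, hfx3⟩⟩ : Σ u : Fin (v + 1), GT N c (u : ℕ)) with hxd
    set y := (⟨uy, ⟨fy, hfy1, hfy2, hfy3⟩⟩ : Σ u : Fin (v + 1), GT N c (u : ℕ)) with hyd
    have hfeq : ∀ i : Fin (c + 1), fx i = fy i := by
      intro i
      have h1 : F x ⟨(i : ℕ), by omega⟩ = fx ⟨(i : ℕ), i.isLt⟩ := dif_pos _
      have h2 : F y ⟨(i : ℕ), by omega⟩ = fy ⟨(i : ℕ), i.isLt⟩ := dif_pos _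
      have h3 : (⟨(i : ℕ), i.isLt⟩ : Fin (c + 1)) = i := Fin.ext rfl
      rw [h3] at h1 h2
      rw [← h1, ← h2, heq]
    have hu : ux = uy := by
      apply Fin.ext
      rw [← hfx3, ← hfy3]
      exact congrArg (fun z => ((z : Fin N) : ℕ)) (hfeq (Fin.last c))
    subst hu
    have : fx = fy := funext hfeq
    subst this
    rfl
  · rintro ⟨f, hf1, hf2, hf3⟩
    have huv : (f (Fin.castSucc (Fin.last c)) : ℕ) ≤ v := by
      have h6 := hf1 (Fin.le_last (Fin.castSucc (Fin.last c)))
      rw [Fin.le_def, hf3] at h6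
      exact h6
    refine ⟨⟨⟨(f (Fin.castSucc (Fin.last c)) : ℕ), by omega⟩,
      ⟨fun i => f (Fin.castSucc i), ?_, ?_, ?_⟩⟩, ?_⟩
    · intro a b hab
      exact hf1 (by rw [Fin.le_def]; simpa using hab)
    · intro i
      have := hf2 (Fin.castSucc i)
      simpa using this
    · rfl
    · apply Subtype.ext
      funext i
      apply Fin.ext
      rw [hFval]
      by_cases h : (i : ℕ) < c + 1
      · rw [dif_pos h]
        have h5 : Fin.castSucc (⟨(i : ℕ), h⟩ : Fin (c + 1)) = i := Fin.ext rfl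
        simp only [h5]
      · rw [dif_neg h]
        have h5 : i = Fin.last (c + 1) := by
          apply Fin.ext
          have := i.isLt
          simp [Fin.last]
          omega
        rw [h5, hf3]

end GCount

section Binom

lemma S1 (c : ℕ) : ∀ v, c ≤ v →
    ∑ u ∈ Finset.Icc c v, (u + c).choose c + (2 * c).choose (c + 1)
      = (v + c + 1).choose (c + 1) := by
  intro v hv
  induction v, hv using Nat.le_induction with
  | base =>
    rw [Finset.Icc_self, Finset.sum_singleton, two_mul]
    rw [Nat.choose_succ_succ' (c + c) c]
  | succ v hv ih =>
    rw [Finset.sum_Icc_succ_top (by omega)]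
    have e : v + 1 + c = v + c + 1 := by omega
    rw [e, Nat.choose_succ_succ' (v + c + 1) c]
    omega

lemma S2 (c : ℕ) : ∀ v, c ≤ v →
    ∑ u ∈ Finset.Icc c v, (u + c).choose (u + 2) + (2 * c).choose (c + 1)
      = (v + c + 1).choose (v + 2) := by
  intro v hv
  induction v, hv using Nat.le_induction with
  | base =>
    rw [Finset.Icc_self, Finset.sum_singleton, two_mul]
    rw [Nat.choose_succ_succ' (c + c) (c + 1),
      show c + 1 + 1 = c + 2 from rfl]
    omega
  | succ v hv ih =>
    rw [Finset.sum_Icc_succ_top (by omega)]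
    have e : v + 1 + c = v + c + 1 := by omega
    have e2 : v + 1 + 2 = v + 3 := by omega
    rw [e, e2, Nat.choose_succ_succ' (v + c + 1) (v + 2),
      show v + 2 + 1 = v + 3 from rfl]
    omega

end Binom

section Closed
variable {N : ℕ}

lemma G_closed : ∀ c v : ℕ, c ≤ v → v < N →
    (G N c v : ℤ) = ((v + c).choose c : ℤ) - ((v + c).choose (v + 2) : ℤ) := by
  intro c
  induction c with
  | zero =>
    intro v hcv hvN
    rw [G_base v hvN]
    rw [Nat.choose_zero_right, Nat.choose_eq_zero_of_lt (by omega)]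
    simp
  | succ c ih =>
    intro v hcv hvN
    rw [G_rec c v hcv hvN]
    have hcast : ((∑ u : Fin (v + 1), G N c (u : ℕ) : ℕ) : ℤ)
        = ∑ u ∈ Finset.range (v + 1), (G N c u : ℤ) := by
      push_cast [Fin.sum_univ_eq_sum_range]
      rfl
    rw [hcast]
    have hsplit : ∑ u ∈ Finset.range (v + 1), (G N c u : ℤ)
        = ∑ u ∈ Finset.Icc c v, (G N c u : ℤ) := by
      rw [Finset.range_eq_Ico, ← Finset.sum_Ico_consecutive _ (Nat.zero_le c) (by omega),
        Finset.Ico_add_one_right_eq_Icc]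
      have hz : ∑ u ∈ Finset.Ico 0 c, (G N c u : ℤ) = 0 := by
        apply Finset.sum_eq_zero
        intro u hu
        rw [G_zero c u (Finset.mem_Ico.mp hu).2]
        rfl
      rw [hz, zero_add]
    rw [hsplit]
    have hterm : ∑ u ∈ Finset.Icc c v, (G N c u : ℤ)
        = ∑ u ∈ Finset.Icc c v, (((u + c).choose c : ℤ) - ((u + c).choose (u + 2) : ℤ)) := by
      apply Finset.sum_congr rfl
      intro u hu
      have hu' := Finset.mem_Icc.mp hu
      exact ih u hu'.1 (by omega)
    rw [hterm, Finset.sum_sub_distrib]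
    have hs1 := S1 c v (by omega)
    have hs2 := S2 c v (by omega)
    have hs1' : ∑ u ∈ Finset.Icc c v, ((u + c).choose c : ℤ)
        = ((v + c + 1).choose (c + 1) : ℤ) - ((2 * c).choose (c + 1) : ℤ) := by
      have := congrArg (fun n : ℕ => (n : ℤ)) hs1
      push_cast at this ⊢
      omega
    have hs2' : ∑ u ∈ Finset.Icc c v, ((u + c).choose (u + 2) : ℤ)
        = ((v + c + 1).choose (v + 2) : ℤ) - ((2 * c).choose (c + 1) : ℤ) := by
      have := congrArg (fun n : ℕ => (n : ℤ)) hs2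
      push_cast at this ⊢
      omega
    rw [hs1', hs2']
    have e : v + (c + 1) = v + c + 1 := by omega
    rw [e]
    ring

end Closed

section QForm
variable {N : ℕ}

lemma G_Q (K v : ℕ) (h : K ≤ v) (hvN : v < N) :
    (G N K v : ℚ) = ((K + v + 1).choose K : ℚ) * ((v - K + 2 : ℕ) : ℚ) / ((v + 2 : ℕ) : ℚ) := by
  have hgz := G_closed (N := N) K v h hvN
  have hgq : (G N K v : ℚ) = ((v + K).choose K : ℚ) - ((v + K).choose (v + 2) : ℚ) := by
    exact_mod_cast congrArg (fun z : ℤ => (z : ℚ)) hgz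
  rw [hgq, eq_div_iff (by positivity)]
  match K, h with
  | 0, h =>
    rw [show v + 0 = v from rfl, Nat.choose_zero_right,
      Nat.choose_eq_zero_of_lt (show v < v + 2 by omega), Nat.choose_zero_right,
      show v - 0 + 2 = v + 2 from by omega]
    push_cast
    ring
  | 1, h =>
    rw [Nat.choose_one_right, Nat.choose_eq_zero_of_lt (show v + 1 < v + 2 by omega),
      Nat.choose_one_right, show v - 1 + 2 = v + 1 from by omega]
    push_cast
    ring
  | (K' + 2), h =>
    have hKv : K' + 2 ≤ v + (K' + 2) := by omega
    have hv2 : v + 2 ≤ v + (K' + 2) := by omega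
    have hK2 : K' + 2 ≤ K' + 2 + v + 1 := by omega
    rw [Nat.cast_choose ℚ hKv, Nat.cast_choose ℚ hv2, Nat.cast_choose ℚ hK2]
    rw [show v + (K' + 2) - (K' + 2) = v from by omega,
      show v + (K' + 2) - (v + 2) = K' from by omega,
      show K' + 2 + v + 1 - (K' + 2) = v + 1 from by omega,
      show v - (K' + 2) + 2 = v - K' from by omega]
    rw [show (K' + 2 + v + 1) = (v + (K' + 2)) + 1 from by omega,
      Nat.factorial_succ (v + (K' + 2))]
    rw [show (v + 2) = (v + 1) + 1 from rfl,
      Nat.factorial_succ (v + 1), Nat.factorial_succ v]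
    rw [show (K' + 2) = (K' + 1) + 1 from rfl,
      Nat.factorial_succ (K' + 1), Nat.factorial_succ K']
    have hsub : ((v - K' : ℕ) : ℚ) = (v : ℚ) - (K' : ℚ) := by
      rw [Nat.cast_sub (by omega)]
    have c1 : ((Nat.factorial v : ℕ) : ℚ) ≠ 0 := Nat.cast_ne_zero.mpr (Nat.factorial_ne_zero v)
    have c2 : ((Nat.factorial K' : ℕ) : ℚ) ≠ 0 := Nat.cast_ne_zero.mpr (Nat.factorial_ne_zero K')
    have c3 : ((Nat.factorial (v + (K' + 1 + 1)) : ℕ) : ℚ) ≠ 0 :=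
      Nat.cast_ne_zero.mpr (Nat.factorial_ne_zero _)
    have d1 : ((v : ℚ) + 1) ≠ 0 := by positivity
    have d2 : ((v : ℚ) + 1 + 1) ≠ 0 := by positivity
    have d3 : ((K' : ℚ) + 1) ≠ 0 := by positivity
    have d4 : ((K' : ℚ) + 1 + 1) ≠ 0 := by positivity
    push_cast [hsub]
    field_simp
    ring
end QForm

theorem winCount_formula' (N k : ℕ) (hk : 1 ≤ k) (hkN : k ≤ N - 1) :
    ((Nat.card {p : Equiv.Perm (Fin N) // Avoids321 p ∧ Winnable N k p} : ℕ) : ℚ) =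
      ∑ i ∈ Finset.Icc 1 (N - k),
        (Nat.choose ((k - 1) + (N - i)) (k - 1) : ℚ) *
          (((N - k - i + 2 : ℕ) : ℚ) / (((N - i) + 1 : ℕ) : ℚ)) *
          ((N - k - i + 1 : ℕ) : ℚ) := by
  obtain ⟨K, rfl⟩ : ∃ K, k = K + 1 := ⟨k - 1, by omega⟩
  have hN2 : K + 2 ≤ N := by omega
  have hK1 : K + 1 < N := by omega
  have hK : K < N := by omega
  rw [card_perm_eq N K hK, card_QType hK1 hK]
  rw [Fin.sum_univ_eq_sum_range (fun v => G N K v * (v + 1 - K))]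
  rw [Nat.cast_sum]
  rw [← Finset.sum_subset (show Finset.Icc K (N - 2) ⊆ Finset.range (N - 1) by
      intro x hx
      rw [Finset.mem_Icc] at hx
      rw [Finset.mem_range]
      omega)
    (by
      intro x hx hnx
      rw [Finset.mem_range] at hx
      rw [Finset.mem_Icc] at hnx
      have hxK : x < K := by omega
      rw [G_zero K x hxK]
      simp)]
  apply Finset.sum_nbij' (fun v => N - 1 - v) (fun i => N - 1 - i)
  · intro v hv
    rw [Finset.mem_Icc] at hv ⊢
    omega
  · intro i hi
    rw [Finset.mem_Icc] at hi ⊢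
    omega
  · intro v hv
    rw [Finset.mem_Icc] at hv
    omega
  · intro i hi
    rw [Finset.mem_Icc] at hi
    omega
  · intro v hv
    rw [Finset.mem_Icc] at hv
    have e0 : K + 1 - 1 = K := by omega
    have e1 : K + (N - (N - 1 - v)) = K + v + 1 := by omega
    have e2 : N - (K + 1) - (N - 1 - v) + 2 = v - K + 2 := by omega
    have e3 : N - (N - 1 - v) + 1 = v + 2 := by omega
    have e4 : N - (K + 1) - (N - 1 - v) + 1 = v + 1 - K := by omega
    rw [e0, e1, e2, e3, e4]
    rw [Nat.cast_mul, G_Q K v (by omega) (by omega)]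
    ring


/-- The number of 321-avoiding `k`-winnable permutations of size `N` equals
`∑_{i=1}^{N-k} binom((k-1)+(N-i), k-1) · ((N-k-i+2)/((N-i)+1)) · (N-k-i+1)`. -/
theorem winCount_formula (N k : ℕ) (hk : 1 ≤ k) (hkN : k ≤ N - 1) :
    (winCount N k : ℚ) =
      ∑ i ∈ Finset.Icc 1 (N - k),
        (Nat.choose ((k - 1) + (N - i)) (k - 1) : ℚ) *
          (((N - k - i + 2 : ℕ) : ℚ) / (((N - i) + 1 : ℕ) : ℚ)) *
          ((N - k - i + 1 : ℕ) : ℚ) := by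
  exact winCount_formula' N k hk hkN
end
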